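/- arXiv:2012.13913 — 4 statements merged into one kernel-verified Lean document; each statement's English description precedes it below -/
import Mathlib

section
/- For every natural number n, the n-th moment of the weight W(·;a,b;c,d) is given by ∫₀¹ xⁿ W(x;a,b;c,d) dx = ((a)_n (b)_n)/((c)_n (d)_n); in particular (n = 0), W(·;a,b;c,d) is a probability density function on the interval (0,1). -/
open MeasureTheory

/-- Pochhammer symbol `(z)_n = z (z+1) ⋯ (z+n-1)`. -/
noncomputable def poch (z : ℝ) (n : ℕ) : ℝ := ∏ i ∈ Finset.range n, (z + i)

/-- Gauss hypergeometric series `₂F₁(α, β; γ; z)`. -/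
noncomputable def twoF1 (α β γ z : ℝ) : ℝ :=
  ∑' n : ℕ, (poch α n * poch β n) / (poch γ n * n.factorial) * z ^ n

/-- The weight function `W(x; a, b; c, d)`. -/
noncomputable def W (a b c d : ℝ) (x : ℝ) : ℝ :=
  (Real.Gamma c * Real.Gamma d) /
      (Real.Gamma a * Real.Gamma b * Real.Gamma (c + d - a - b)) *
    (x ^ (a - 1) * (1 - x) ^ (c + d - a - b - 1) *
      twoF1 (c - b) (d - b) (c + d - a - b) (1 - x))

set_option maxHeartbeats 1000000

open Real Set


lemma poch_zero (z : ℝ) : poch z 0 = 1 := by simp [poch]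

lemma poch_succ (z : ℝ) (n : ℕ) : poch z (n + 1) = poch z n * (z + n) := by
  simp [poch, Finset.prod_range_succ]

lemma poch_pos {z : ℝ} (hz : 0 < z) (n : ℕ) : 0 < poch z n :=
  Finset.prod_pos fun i _ => by positivity

lemma poch_nonneg {z : ℝ} (hz : 0 ≤ z) (n : ℕ) : 0 ≤ poch z n :=
  Finset.prod_nonneg fun i _ => by positivity

lemma Gamma_add_nat {z : ℝ} (hz : 0 < z) (n : ℕ) :
    Real.Gamma (z + n) = Real.Gamma z * poch z n := by
  induction n with
  | zero => simp [poch_zero]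
  | succ n ih =>
      have h1 : z + (n + 1 : ℕ) = (z + n) + 1 := by push_cast; ring
      have h2 : (0:ℝ) < z + n := by positivity
      rw [h1, Real.Gamma_add_one h2.ne', ih, poch_succ]; ring

/-- Ratio-test summability for hypergeometric-type series with `|z| < 1`. -/
lemma summable_hyp (α β : ℝ) {γ : ℝ} (hγ : 0 < γ) {z : ℝ} (hz : |z| < 1) :
    Summable (fun k : ℕ => poch α k * poch β k / (poch γ k * k.factorial) * z ^ k) := by
  set f : ℕ → ℝ := fun k => poch α k * poch β k / (poch γ k * k.factorial) * z ^ k with hf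
  have hr1 : (1 + |z|) / 2 < 1 := by linarith
  refine summable_of_ratio_norm_eventually_le hr1 ?_
  -- ratio computation
  have key : ∀ k : ℕ, f (k + 1) = f k * ((α + k) * (β + k) / ((γ + k) * (k + 1)) * z) := by
    intro k
    have hγk : (0:ℝ) < γ + k := by positivity
    have hfk : (0:ℝ) < (k.factorial : ℝ) := by positivity
    simp only [hf, poch_succ, pow_succ, Nat.factorial_succ]
    push_cast
    field_simp
  have htend : Filter.Tendsto
      (fun k : ℕ => |(α + k) * (β + k) / ((γ + k) * (k + 1)) * z|) Filter.atTop
      (nhds |z|) := by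
    have hn : Filter.Tendsto (fun k : ℕ => ((k : ℝ))) Filter.atTop Filter.atTop :=
      tendsto_natCast_atTop_atTop
    have h1 : Filter.Tendsto (fun k : ℕ => (γ + (k:ℝ))⁻¹) Filter.atTop (nhds 0) :=
      (Filter.tendsto_atTop_add_const_left _ γ hn).inv_tendsto_atTop
    have h2 : Filter.Tendsto (fun k : ℕ => ((k:ℝ) + 1)⁻¹) Filter.atTop (nhds 0) :=
      (Filter.tendsto_atTop_add_const_right _ 1 hn).inv_tendsto_atTop
    have hA : Filter.Tendsto (fun k : ℕ => (α + k) / (γ + k)) Filter.atTop (nhds 1) := by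
      have heq : ∀ k : ℕ, (α + (k:ℝ)) / (γ + k) = 1 + (α - γ) * (γ + k)⁻¹ := by
        intro k
        have hγk : (0:ℝ) < γ + k := by positivity
        field_simp
        ring
      have := tendsto_const_nhds (x := (1:ℝ)) (f := Filter.atTop) (α := ℕ) |>.add
        ((tendsto_const_nhds (x := α - γ)).mul h1)
      simp only [mul_zero, add_zero] at this
      exact (Filter.Tendsto.congr (fun k => (heq k).symm)) this
    have hB : Filter.Tendsto (fun k : ℕ => (β + k) / ((k:ℝ) + 1)) Filter.atTop (nhds 1) := by
      have heq : ∀ k : ℕ, (β + (k:ℝ)) / ((k:ℝ) + 1) = 1 + (β - 1) * ((k:ℝ) + 1)⁻¹ := by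
        intro k
        have hk : (0:ℝ) < (k:ℝ) + 1 := by positivity
        field_simp
        ring
      have := tendsto_const_nhds (x := (1:ℝ)) (f := Filter.atTop) (α := ℕ) |>.add
        ((tendsto_const_nhds (x := β - 1)).mul h2)
      simp only [mul_zero, add_zero] at this
      exact (Filter.Tendsto.congr (fun k => (heq k).symm)) this
    have hC : Filter.Tendsto
        (fun k : ℕ => (α + k) * (β + k) / ((γ + k) * ((k:ℝ) + 1)) * z) Filter.atTop
        (nhds z) := by
      have := (hA.mul hB).mul_const z
      simp only [one_mul] at this
      refine this.congr fun k => ?_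
      rw [div_mul_div_comm]
    exact (continuous_abs.tendsto z).comp hC
  have hlt : |z| < (1 + |z|) / 2 := by linarith
  filter_upwards [htend.eventually_le_const hlt] with k hk
  rw [key k, norm_mul]
  calc ‖f k‖ * ‖(α + k) * (β + k) / ((γ + k) * (k + 1)) * z‖
      ≤ ‖f k‖ * ((1 + |z|) / 2) := by
        exact mul_le_mul_of_nonneg_left hk (norm_nonneg _)
    _ = (1 + |z|) / 2 * ‖f k‖ := by ring

lemma lintegral_ofReal_eq {s : Set ℝ} (hs : MeasurableSet s) {f : ℝ → ℝ} {A : ℝ}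
    (hi : IntegrableOn f s) (hnn : ∀ x ∈ s, 0 ≤ f x) (hA : ∫ x in s, f x = A) :
    ∫⁻ x in s, ENNReal.ofReal (f x) = ENNReal.ofReal A := by
  rw [← hA, ← ofReal_integral_eq_lintegral_ofReal hi
    ((ae_restrict_iff' hs).2 (Filter.Eventually.of_forall hnn))]

lemma integrableOn_gamma_scaled {s r : ℝ} (hs : 0 < s) (hr : 0 < r) :
    IntegrableOn (fun t : ℝ => t ^ (s - 1) * Real.exp (-(r * t))) (Ioi 0) := by
  have h := Real.GammaIntegral_convergent hs
  have h2 : IntegrableOn (fun t : ℝ => Real.exp (-(r * t)) * (r * t) ^ (s - 1)) (Ioi 0) := by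
    have := (integrableOn_Ioi_comp_mul_left_iff
      (fun x : ℝ => Real.exp (-x) * x ^ (s - 1)) 0 hr).2 (by simpa using h)
    simpa using this
  have h3 := h2.const_mul (r ^ (1 - s))
  refine (integrable_congr ?_).mp h3
  refine (ae_restrict_iff' measurableSet_Ioi).2 (Filter.Eventually.of_forall fun t ht => ?_)
  have ht0 : (0:ℝ) < t := ht
  simp only
  rw [Real.mul_rpow hr.le ht0.le]
  rw [show r ^ (1 - s) * (Real.exp (-(r * t)) * (r ^ (s - 1) * t ^ (s - 1)))
      = (r ^ (1 - s) * r ^ (s - 1)) * (t ^ (s - 1) * Real.exp (-(r * t))) by ring]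
  rw [← Real.rpow_add hr]
  norm_num

lemma lintegral_gamma_scaled {s r : ℝ} (hs : 0 < s) (hr : 0 < r) :
    ∫⁻ t in Ioi (0:ℝ), ENNReal.ofReal (t ^ (s - 1) * Real.exp (-(r * t)))
      = ENNReal.ofReal ((1 / r) ^ s * Real.Gamma s) := by
  refine lintegral_ofReal_eq measurableSet_Ioi (integrableOn_gamma_scaled hs hr)
    (fun t ht => by have : (0:ℝ) < t := ht; positivity) ?_
  exact integral_rpow_mul_exp_neg_mul_Ioi hs hr

lemma binomial_ennreal {α z : ℝ} (hα : 0 < α) (hz0 : 0 ≤ z) (hz : z < 1) :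
    ∑' k : ℕ, ENNReal.ofReal (poch α k / k.factorial * z ^ k)
      = ENNReal.ofReal ((1 - z) ^ (-α)) := by
  have hΓ : 0 < Real.Gamma α := Real.Gamma_pos_of_pos hα
  have h1z : (0:ℝ) < 1 - z := by linarith
  have step1 : ∀ k : ℕ, ENNReal.ofReal (poch α k / k.factorial * z ^ k)
      = ∫⁻ t in Ioi (0:ℝ), ENNReal.ofReal
          (z ^ k / (Real.Gamma α * k.factorial) *
            (t ^ (α + k - 1) * Real.exp (-(1 * t)))) := by
    intro k
    have hc : (0:ℝ) ≤ z ^ k / (Real.Gamma α * k.factorial) := by positivity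
    simp_rw [ENNReal.ofReal_mul hc]
    rw [lintegral_const_mul' _ _ ENNReal.ofReal_ne_top]
    rw [lintegral_gamma_scaled (by positivity : (0:ℝ) < α + k) one_pos]
    rw [← ENNReal.ofReal_mul hc]
    congr 1
    rw [Gamma_add_nat hα k]
    have hk : (0:ℝ) < (k.factorial : ℝ) := by positivity
    field_simp
    simp [Real.one_rpow]
  calc ∑' k : ℕ, ENNReal.ofReal (poch α k / k.factorial * z ^ k)
      = ∑' k : ℕ, ∫⁻ t in Ioi (0:ℝ), ENNReal.ofReal
          (z ^ k / (Real.Gamma α * k.factorial) *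
            (t ^ (α + k - 1) * Real.exp (-(1 * t)))) := by
        exact tsum_congr step1
    _ = ∫⁻ t in Ioi (0:ℝ), ∑' k : ℕ, ENNReal.ofReal
          (z ^ k / (Real.Gamma α * k.factorial) *
            (t ^ (α + k - 1) * Real.exp (-(1 * t)))) := by
        refine (lintegral_tsum fun k => ?_).symm
        apply Measurable.aemeasurable
        apply Measurable.ennreal_ofReal
        apply Measurable.const_mul
        exact ((by measurability : Measurable fun t : ℝ => t ^ (α + (k:ℝ) - 1)).mul
          (((measurable_const.mul measurable_id).neg).exp))
    _ = ∫⁻ t in Ioi (0:ℝ), ENNReal.ofReal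
          (1 / Real.Gamma α * (t ^ (α - 1) * Real.exp (-((1 - z) * t)))) := by
        refine setLIntegral_congr_fun measurableSet_Ioi
          (fun t ht => ?_)
        have ht0 : (0:ℝ) < t := ht
        have key : ∀ k : ℕ, z ^ k / (Real.Gamma α * k.factorial) *
            (t ^ (α + k - 1) * Real.exp (-(1 * t)))
            = (t ^ (α - 1) * Real.exp (-(1 * t)) / Real.Gamma α) *
              ((z * t) ^ k / k.factorial) := by
          intro k
          rw [show α + (k:ℝ) - 1 = (α - 1) + k by ring, Real.rpow_add ht0,
            Real.rpow_natCast, mul_pow]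
          have hk : (0:ℝ) < (k.factorial : ℝ) := by positivity
          field_simp
        simp_rw [key]
        have hE : (0:ℝ) ≤ t ^ (α - 1) * Real.exp (-(1 * t)) / Real.Gamma α := by
          positivity
        simp_rw [ENNReal.ofReal_mul hE]
        rw [ENNReal.tsum_mul_left]
        rw [← ENNReal.ofReal_tsum_of_nonneg (fun k => by positivity)
          (Real.summable_pow_div_factorial (z * t))]
        rw [show (∑' k : ℕ, (z * t) ^ k / k.factorial) = Real.exp (z * t) by
          rw [Real.exp_eq_exp_ℝ, NormedSpace.exp_eq_tsum_div]]
        rw [← ENNReal.ofReal_mul hE]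
        congr 1
        rw [show t ^ (α - 1) * Real.exp (-(1 * t)) / Real.Gamma α * Real.exp (z * t)
            = 1 / Real.Gamma α * (t ^ (α - 1) *
              (Real.exp (-(1 * t)) * Real.exp (z * t))) by ring]
        rw [← Real.exp_add]
        ring_nf
    _ = ENNReal.ofReal ((1 - z) ^ (-α)) := by
        have hc : (0:ℝ) ≤ 1 / Real.Gamma α := by positivity
        simp_rw [ENNReal.ofReal_mul hc]
        rw [lintegral_const_mul' _ _ ENNReal.ofReal_ne_top]
        rw [lintegral_gamma_scaled hα h1z]
        rw [← ENNReal.ofReal_mul hc]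
        congr 1
        rw [one_div (1 - z), Real.inv_rpow h1z.le, ← Real.rpow_neg h1z.le]
        field_simp

lemma complex_eq_real_beta {p q : ℝ} (hp : 0 < p) (hq : 0 < q) :
    Complex.betaIntegral p q =
      ((∫ x in Ioo (0:ℝ) 1, x ^ (p - 1) * (1 - x) ^ (q - 1) : ℝ) : ℂ) := by
  rw [Complex.betaIntegral, intervalIntegral.integral_of_le zero_le_one,
    ← MeasureTheory.integral_Ioc_eq_integral_Ioo (f := fun x : ℝ => x ^ (p-1) * (1-x) ^ (q-1))]
  rw [show ((∫ x in Ioc (0:ℝ) 1, x ^ (p - 1) * (1 - x) ^ (q - 1) : ℝ) : ℂ)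
      = ∫ x in Ioc (0:ℝ) 1, ((x ^ (p - 1) * (1 - x) ^ (q - 1) : ℝ) : ℂ)
      from (integral_ofReal (𝕜 := ℂ)).symm]
  refine setIntegral_congr_fun measurableSet_Ioc fun x hx => ?_
  have hx0 : (0:ℝ) ≤ x := le_of_lt hx.1
  have hx1 : (0:ℝ) ≤ 1 - x := by linarith [hx.2]
  rw [Complex.ofReal_mul, Complex.ofReal_cpow hx0, Complex.ofReal_cpow hx1]
  push_cast
  ring_nf

lemma betaReal_integrableOn {p q : ℝ} (hp : 0 < p) (hq : 0 < q) :
    IntegrableOn (fun x : ℝ => x ^ (p - 1) * (1 - x) ^ (q - 1)) (Ioo 0 1) := by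
  have h := Complex.betaIntegral_convergent (u := p) (v := q) (by simpa) (by simpa)
  rw [intervalIntegrable_iff_integrableOn_Ioo_of_le zero_le_one] at h
  have := h.re
  refine (integrable_congr ?_).mp this
  refine (ae_restrict_iff' measurableSet_Ioo).2 (Filter.Eventually.of_forall fun x hx => ?_)
  have hx0 : (0:ℝ) ≤ x := le_of_lt hx.1
  have hx1 : (0:ℝ) ≤ 1 - x := by linarith [hx.2]
  have hxeq : ((x:ℂ) ^ ((p:ℂ) - 1) * (1 - (x:ℂ)) ^ ((q:ℂ) - 1))
      = ((x ^ (p - 1) * (1 - x) ^ (q - 1) : ℝ) : ℂ) := by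
    rw [Complex.ofReal_mul, Complex.ofReal_cpow hx0, Complex.ofReal_cpow hx1]
    push_cast
    ring_nf
  simp only [hxeq]
  exact Complex.ofReal_re _

lemma betaReal {p q : ℝ} (hp : 0 < p) (hq : 0 < q) :
    ∫ x in Ioo (0:ℝ) 1, x ^ (p - 1) * (1 - x) ^ (q - 1)
      = Real.Gamma p * Real.Gamma q / Real.Gamma (p + q) := by
  have h := Complex.Gamma_mul_Gamma_eq_betaIntegral (s := p) (t := q) (by simpa) (by simpa)
  rw [complex_eq_real_beta hp hq] at h
  rw [show ((p:ℂ) + q) = ((p + q : ℝ) : ℂ) by push_cast; ring] at h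
  rw [Complex.Gamma_ofReal, Complex.Gamma_ofReal, Complex.Gamma_ofReal] at h
  have h' : Real.Gamma p * Real.Gamma q
      = Real.Gamma (p + q) * ∫ x in Ioo (0:ℝ) 1, x ^ (p - 1) * (1 - x) ^ (q - 1) := by
    exact_mod_cast h
  have hpq : Real.Gamma (p + q) ≠ 0 := (Real.Gamma_pos_of_pos (by positivity)).ne'
  field_simp [h']
  rw [h']; ring


lemma measurable_one_sub_rpow (c : ℝ) : Measurable fun x : ℝ => (1 - x) ^ c :=
  (by measurability : Measurable fun x : ℝ => x ^ c).comp
    (measurable_const.sub measurable_id)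

lemma lintegral_beta {p q : ℝ} (hp : 0 < p) (hq : 0 < q) :
    ∫⁻ x in Ioo (0:ℝ) 1, ENNReal.ofReal (x ^ (p - 1) * (1 - x) ^ (q - 1))
      = ENNReal.ofReal (Real.Gamma p * Real.Gamma q / Real.Gamma (p + q)) :=
  lintegral_ofReal_eq measurableSet_Ioo (betaReal_integrableOn hp hq)
    (fun x hx => by
      have h1 : (0:ℝ) < x := hx.1
      have h2 : (0:ℝ) < 1 - x := by linarith [hx.2]
      positivity)
    (betaReal hp hq)

lemma gauss_ennreal {α β γ : ℝ} (hα : 0 < α) (hβ : 0 < β) (hβγ : β < γ)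
    (hαβγ : α + β < γ) :
    ∑' k : ℕ, ENNReal.ofReal (poch α k * poch β k / (poch γ k * k.factorial))
      = ENNReal.ofReal (Real.Gamma γ * Real.Gamma (γ - α - β) /
          (Real.Gamma (γ - α) * Real.Gamma (γ - β))) := by
  have hγ : 0 < γ := by linarith
  have hγβ : 0 < γ - β := by linarith
  have hγα : 0 < γ - α := by linarith
  have hγαβ : 0 < γ - α - β := by linarith
  have hΓγ : 0 < Real.Gamma γ := Real.Gamma_pos_of_pos hγ
  have hΓβ : 0 < Real.Gamma β := Real.Gamma_pos_of_pos hβ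
  have hΓγβ : 0 < Real.Gamma (γ - β) := Real.Gamma_pos_of_pos hγβ
  have hΓγα : 0 < Real.Gamma (γ - α) := Real.Gamma_pos_of_pos hγα
  have hΓγαβ : 0 < Real.Gamma (γ - α - β) := Real.Gamma_pos_of_pos hγαβ
  set c0 : ℝ := Real.Gamma β * Real.Gamma (γ - β) / Real.Gamma γ with hc0
  have hc0pos : 0 < c0 := by positivity
  have main : (∑' k : ℕ, ENNReal.ofReal
        (poch α k * poch β k / (poch γ k * k.factorial))) * ENNReal.ofReal c0
      = ENNReal.ofReal (Real.Gamma β * Real.Gamma (γ - α - β) / Real.Gamma (γ - α)) := by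
    rw [← ENNReal.tsum_mul_right]
    have step1 : ∀ k : ℕ, ENNReal.ofReal
          (poch α k * poch β k / (poch γ k * k.factorial)) * ENNReal.ofReal c0
        = ∫⁻ x in Ioo (0:ℝ) 1, ENNReal.ofReal
            (poch α k / k.factorial * (x ^ (β + k - 1) * (1 - x) ^ (γ - β - 1))) := by
      intro k
      have hpα := poch_nonneg hα.le k
      have hpβ := poch_nonneg hβ.le k
      have hpγ := poch_pos hγ k
      have hck : (0:ℝ) ≤ poch α k / k.factorial := by positivity
      have htk : (0:ℝ) ≤ poch α k * poch β k / (poch γ k * k.factorial) := by positivity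
      simp_rw [ENNReal.ofReal_mul hck]
      rw [lintegral_const_mul' _ _ ENNReal.ofReal_ne_top]
      rw [lintegral_beta (by positivity : (0:ℝ) < β + k) hγβ]
      rw [← ENNReal.ofReal_mul htk, ← ENNReal.ofReal_mul hck]
      congr 1
      rw [show β + (k:ℝ) + (γ - β) = γ + k by ring, Gamma_add_nat hβ k,
        Gamma_add_nat hγ k, hc0]
      have h1 : poch γ k ≠ 0 := (poch_pos hγ k).ne'
      have h2 : ((k.factorial : ℝ)) ≠ 0 := by positivity
      field_simp
    simp_rw [step1]
    rw [← lintegral_tsum fun k => by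
      apply Measurable.aemeasurable
      apply Measurable.ennreal_ofReal
      apply Measurable.const_mul
      exact (by measurability : Measurable fun x : ℝ => x ^ (β + (k:ℝ) - 1)).mul
        (measurable_one_sub_rpow (γ - β - 1))]
    have ptwise : ∀ x ∈ Ioo (0:ℝ) 1, (∑' k : ℕ, ENNReal.ofReal
          (poch α k / k.factorial * (x ^ (β + k - 1) * (1 - x) ^ (γ - β - 1))))
        = ENNReal.ofReal (x ^ (β - 1) * (1 - x) ^ (γ - α - β - 1)) := by
      intro x hx
      have hx0 : (0:ℝ) < x := hx.1
      have hx1 : (0:ℝ) < 1 - x := by linarith [hx.2]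
      have key : ∀ k : ℕ, poch α k / k.factorial *
          (x ^ (β + k - 1) * (1 - x) ^ (γ - β - 1))
          = (x ^ (β - 1) * (1 - x) ^ (γ - β - 1)) * (poch α k / k.factorial * x ^ k) := by
        intro k
        rw [show β + (k:ℝ) - 1 = (β - 1) + k by ring, Real.rpow_add hx0,
          Real.rpow_natCast]
        ring
      simp_rw [key]
      have hE : (0:ℝ) ≤ x ^ (β - 1) * (1 - x) ^ (γ - β - 1) := by positivity
      simp_rw [ENNReal.ofReal_mul hE]
      rw [ENNReal.tsum_mul_left, binomial_ennreal hα hx0.le (by linarith [hx.1, hx.2])]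
      rw [← ENNReal.ofReal_mul hE]
      congr 1
      rw [show x ^ (β - 1) * (1 - x) ^ (γ - β - 1) * (1 - x) ^ (-α)
          = x ^ (β - 1) * ((1 - x) ^ (γ - β - 1) * (1 - x) ^ (-α)) by ring,
        ← Real.rpow_add hx1, show γ - β - 1 + -α = γ - α - β - 1 by ring]
    rw [setLIntegral_congr_fun measurableSet_Ioo ptwise]
    rw [show γ - α - β - 1 = (γ - α - β) - 1 by ring]
    rw [lintegral_beta hβ hγαβ]
    rw [show β + (γ - α - β) = γ - α by ring]
  -- now cancel ofReal c0
  have hne : ENNReal.ofReal c0 ≠ 0 := by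
    simp [ENNReal.ofReal_eq_zero, not_le, hc0pos]
  have hnt : ENNReal.ofReal c0 ≠ ⊤ := ENNReal.ofReal_ne_top
  have htarget : ENNReal.ofReal (Real.Gamma γ * Real.Gamma (γ - α - β) /
        (Real.Gamma (γ - α) * Real.Gamma (γ - β))) * ENNReal.ofReal c0
      = ENNReal.ofReal (Real.Gamma β * Real.Gamma (γ - α - β) / Real.Gamma (γ - α)) := by
    rw [← ENNReal.ofReal_mul (by positivity)]
    congr 1
    rw [hc0]
    field_simp
  have := main.trans htarget.symm
  have h2 := congrArg (· * (ENNReal.ofReal c0)⁻¹) this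
  simpa [mul_assoc, ENNReal.mul_inv_cancel hne hnt] using h2

lemma moment_lemma (a b c d : ℝ) (ha : 0 < a) (hb : 0 < b) (hc : 0 < c) (hd : 0 < d)
    (hcd : max a b < min c d) (n : ℕ) :
    ∫ x in Ioo (0:ℝ) 1, (x:ℝ) ^ n * W a b c d x
      = poch a n * poch b n / (poch c n * poch d n) := by
  have hac : a < c := (le_max_left a b).trans_lt (hcd.trans_le (min_le_left c d))
  have had : a < d := (le_max_left a b).trans_lt (hcd.trans_le (min_le_right c d))
  have hbc : b < c := (le_max_right a b).trans_lt (hcd.trans_le (min_le_left c d))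
  have hbd : b < d := (le_max_right a b).trans_lt (hcd.trans_le (min_le_right c d))
  have hδ : (0:ℝ) < c + d - a - b := by linarith
  have hα : (0:ℝ) < c - b := by linarith
  have hβ : (0:ℝ) < d - b := by linarith
  have hγn : (0:ℝ) < (n:ℕ) + a + (c + d - a - b) := by positivity
  have hna : (0:ℝ) < (n:ℕ) + a := by positivity
  have hΓa := Real.Gamma_pos_of_pos ha
  have hΓb := Real.Gamma_pos_of_pos hb
  have hΓc := Real.Gamma_pos_of_pos hc
  have hΓd := Real.Gamma_pos_of_pos hd
  have hΓδ := Real.Gamma_pos_of_pos hδ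
  have hΓγn := Real.Gamma_pos_of_pos hγn
  have hΓna := Real.Gamma_pos_of_pos hna
  have hC : (0:ℝ) < Real.Gamma c * Real.Gamma d /
      (Real.Gamma a * Real.Gamma b * Real.Gamma (c + d - a - b)) := by positivity
  -- the k-th term of the series expansion of `x ^ n * W x`
  set g : ℕ → ℝ → ℝ := fun k x =>
    Real.Gamma c * Real.Gamma d /
        (Real.Gamma a * Real.Gamma b * Real.Gamma (c + d - a - b)) *
      (poch (c - b) k * poch (d - b) k / (poch (c + d - a - b) k * k.factorial)) *
      (x ^ ((n:ℕ) + a - 1) * (1 - x) ^ (c + d - a - b + k - 1)) with hgdef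
  have hgnn : ∀ k, ∀ x ∈ Ioo (0:ℝ) 1, 0 ≤ g k x := by
    intro k x hx
    have hx0 : (0:ℝ) < x := hx.1
    have hx1 : (0:ℝ) < 1 - x := by linarith [hx.2]
    have h1 := poch_nonneg hα.le k
    have h2 := poch_nonneg hβ.le k
    have h3 := poch_pos hδ k
    simp only [hgdef]
    positivity
  have hsum : ∀ x ∈ Ioo (0:ℝ) 1, Summable fun k => g k x := by
    intro x hx
    have hx1 : (0:ℝ) < 1 - x := by linarith [hx.2]
    have h0 := summable_hyp (c - b) (d - b) hδ
      (z := 1 - x) (by rw [abs_of_pos hx1]; linarith [hx.1])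
    have h0' := h0.mul_left (Real.Gamma c * Real.Gamma d /
        (Real.Gamma a * Real.Gamma b * Real.Gamma (c + d - a - b)) *
      (x ^ ((n:ℕ) + a - 1) * (1 - x) ^ (c + d - a - b - 1)))
    refine h0'.congr fun k => ?_
    simp only [hgdef]
    rw [show c + d - a - b + (k:ℕ) - 1 = (c + d - a - b - 1) + (k:ℕ) by push_cast; ring,
      Real.rpow_add hx1, Real.rpow_natCast]
    ring
  have hrepr : ∀ x ∈ Ioo (0:ℝ) 1, (x:ℝ) ^ n * W a b c d x = ∑' k, g k x := by
    intro x hx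
    have hx0 : (0:ℝ) < x := hx.1
    have hx1 : (0:ℝ) < 1 - x := by linarith [hx.2]
    have key : ∀ k : ℕ, g k x =
        (Real.Gamma c * Real.Gamma d /
            (Real.Gamma a * Real.Gamma b * Real.Gamma (c + d - a - b)) *
          (x ^ ((n:ℕ) + a - 1) * (1 - x) ^ (c + d - a - b - 1))) *
        (poch (c - b) k * poch (d - b) k / (poch (c + d - a - b) k * k.factorial) *
          (1 - x) ^ k) := by
      intro k
      simp only [hgdef]
      rw [show c + d - a - b + (k:ℕ) - 1 = (c + d - a - b - 1) + (k:ℕ) by push_cast; ring,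
        Real.rpow_add hx1, Real.rpow_natCast]
      ring
    calc (x:ℝ) ^ n * W a b c d x
        = (Real.Gamma c * Real.Gamma d /
              (Real.Gamma a * Real.Gamma b * Real.Gamma (c + d - a - b)) *
            (x ^ ((n:ℕ) + a - 1) * (1 - x) ^ (c + d - a - b - 1))) *
          twoF1 (c - b) (d - b) (c + d - a - b) (1 - x) := by
          rw [W, show ((n:ℕ):ℝ) + a - 1 = (n:ℕ) + (a - 1) by ring, Real.rpow_add hx0,
            Real.rpow_natCast]
          ring
      _ = ∑' k, g k x := by
          rw [twoF1, ← tsum_mul_left]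
          exact tsum_congr fun k => (key k).symm
  -- the lintegral computation
  have hlint : ∫⁻ x in Ioo (0:ℝ) 1, ENNReal.ofReal ((x:ℝ) ^ n * W a b c d x)
      = ENNReal.ofReal (poch a n * poch b n / (poch c n * poch d n)) := by
    calc ∫⁻ x in Ioo (0:ℝ) 1, ENNReal.ofReal ((x:ℝ) ^ n * W a b c d x)
        = ∫⁻ x in Ioo (0:ℝ) 1, ∑' k, ENNReal.ofReal (g k x) := by
          refine setLIntegral_congr_fun measurableSet_Ioo
            (fun x hx => ?_)
          rw [hrepr x hx]
          exact ENNReal.ofReal_tsum_of_nonneg (fun k => hgnn k x hx) (hsum x hx)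
      _ = ∑' k, ∫⁻ x in Ioo (0:ℝ) 1, ENNReal.ofReal (g k x) := by
          refine lintegral_tsum fun k => ?_
          apply Measurable.aemeasurable
          apply Measurable.ennreal_ofReal
          simp only [hgdef]
          exact (((by measurability : Measurable fun x : ℝ => x ^ (((n:ℕ):ℝ) + a - 1)).mul
            (measurable_one_sub_rpow _)).const_mul _)
      _ = ∑' k, ENNReal.ofReal
            (Real.Gamma c * Real.Gamma d * Real.Gamma ((n:ℕ) + a) /
                (Real.Gamma a * Real.Gamma b * Real.Gamma ((n:ℕ) + a + (c + d - a - b))) *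
              (poch (c - b) k * poch (d - b) k /
                (poch ((n:ℕ) + a + (c + d - a - b)) k * k.factorial))) := by
          refine tsum_congr fun k => ?_
          have h1 := poch_nonneg hα.le k
          have h2 := poch_nonneg hβ.le k
          have h3 := poch_pos hδ k
          have h4 := poch_pos hγn k
          have hkf : (0:ℝ) < (k.factorial : ℝ) := by positivity
          have hck : (0:ℝ) ≤ Real.Gamma c * Real.Gamma d /
              (Real.Gamma a * Real.Gamma b * Real.Gamma (c + d - a - b)) *
              (poch (c - b) k * poch (d - b) k /
                (poch (c + d - a - b) k * k.factorial)) := by positivity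
          simp only [hgdef]
          simp_rw [ENNReal.ofReal_mul hck]
          rw [lintegral_const_mul' _ _ ENNReal.ofReal_ne_top]
          rw [lintegral_beta hna (by positivity : (0:ℝ) < c + d - a - b + k)]
          rw [← ENNReal.ofReal_mul hck]
          congr 1
          rw [show c + d - a - b + (k:ℕ) = (c + d - a - b) + (k:ℕ) by ring]
          rw [Gamma_add_nat hδ k]
          rw [show (n:ℕ) + a + ((c + d - a - b) + (k:ℕ))
              = ((n:ℕ) + a + (c + d - a - b)) + (k:ℕ) by ring]
          rw [Gamma_add_nat hγn k]
          field_simp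
      _ = ENNReal.ofReal
            (Real.Gamma c * Real.Gamma d * Real.Gamma ((n:ℕ) + a) /
              (Real.Gamma a * Real.Gamma b * Real.Gamma ((n:ℕ) + a + (c + d - a - b)))) *
          ∑' k, ENNReal.ofReal
            (poch (c - b) k * poch (d - b) k /
              (poch ((n:ℕ) + a + (c + d - a - b)) k * k.factorial)) := by
          rw [← ENNReal.tsum_mul_left]
          refine tsum_congr fun k => ?_
          rw [← ENNReal.ofReal_mul (div_nonneg
            (mul_nonneg (mul_nonneg hΓc.le hΓd.le) hΓna.le)
            (mul_nonneg (mul_nonneg hΓa.le hΓb.le) hΓγn.le))]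
      _ = ENNReal.ofReal (poch a n * poch b n / (poch c n * poch d n)) := by
          rw [gauss_ennreal hα hβ (by linarith : d - b < (n:ℕ) + a + (c + d - a - b))
            (by linarith : (c - b) + (d - b) < (n:ℕ) + a + (c + d - a - b))]
          rw [← ENNReal.ofReal_mul (div_nonneg
            (mul_nonneg (mul_nonneg hΓc.le hΓd.le) hΓna.le)
            (mul_nonneg (mul_nonneg hΓa.le hΓb.le) hΓγn.le))]
          congr 1
          rw [show (n:ℕ) + a + (c + d - a - b) - (c - b) - (d - b) = b + (n:ℕ) by ring,
            show (n:ℕ) + a + (c + d - a - b) - (c - b) = d + (n:ℕ) by ring,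
            show (n:ℕ) + a + (c + d - a - b) - (d - b) = c + (n:ℕ) by ring,
            show (n:ℕ) + a = a + (n:ℕ) by ring]
          rw [Gamma_add_nat ha n, Gamma_add_nat hb n, Gamma_add_nat hc n,
            Gamma_add_nat hd n]
          have hpc := poch_pos hc n
          have hpd := poch_pos hd n
          have hΓγn' : Real.Gamma (a + (n:ℕ) + (c + d - a - b)) ≠ 0 := by
            rw [show a + ((n:ℕ):ℝ) + (c + d - a - b) = ((n:ℕ):ℝ) + a + (c + d - a - b) by ring]
            exact hΓγn.ne'
          field_simp
  -- convert the Bochner integral to the lintegral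
  have hmeasg : ∀ k, Measurable fun x : ℝ => ENNReal.ofReal (g k x) := by
    intro k
    apply Measurable.ennreal_ofReal
    simp only [hgdef]
    exact (((by measurability : Measurable fun x : ℝ => x ^ (((n:ℕ):ℝ) + a - 1)).mul
      (measurable_one_sub_rpow _)).const_mul _)
  have hFmeas : Measurable fun x : ℝ => (∑' k, ENNReal.ofReal (g k x)).toReal :=
    (Measurable.ennreal_tsum hmeasg).ennreal_toReal
  have hae : (fun x : ℝ => (x:ℝ) ^ n * W a b c d x)
      =ᵐ[volume.restrict (Ioo (0:ℝ) 1)]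
      (fun x : ℝ => (∑' k, ENNReal.ofReal (g k x)).toReal) := by
    refine (ae_restrict_iff' measurableSet_Ioo).2 (Filter.Eventually.of_forall fun x hx => ?_)
    have hx1 : (0:ℝ) < 1 - x := by linarith [hx.2]
    show (x:ℝ) ^ n * W a b c d x = (∑' k, ENNReal.ofReal (g k x)).toReal
    rw [← ENNReal.ofReal_tsum_of_nonneg (fun k => hgnn k x hx) (hsum x hx),
      ENNReal.toReal_ofReal (tsum_nonneg fun k => hgnn k x hx), hrepr x hx]
  have hnn : 0 ≤ᵐ[volume.restrict (Ioo (0:ℝ) 1)]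
      (fun x : ℝ => (x:ℝ) ^ n * W a b c d x) := by
    refine (ae_restrict_iff' measurableSet_Ioo).2 (Filter.Eventually.of_forall fun x hx => ?_)
    show (0:ℝ) ≤ (x:ℝ) ^ n * W a b c d x
    rw [hrepr x hx]
    exact tsum_nonneg fun k => hgnn k x hx
  have hameas : AEMeasurable (fun x : ℝ => (x:ℝ) ^ n * W a b c d x)
      (volume.restrict (Ioo (0:ℝ) 1)) :=
    hFmeas.aemeasurable.congr hae.symm
  rw [integral_eq_lintegral_of_nonneg_ae hnn hameas.aestronglyMeasurable, hlint]
  rw [ENNReal.toReal_ofReal]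
  have h1 := poch_nonneg ha.le n
  have h2 := poch_nonneg hb.le n
  have h3 := poch_pos hc n
  have h4 := poch_pos hd n
  positivity

/-- Moments of the weight `W(·;a,b;c,d)`; in particular (`n = 0`, together with the
nonnegativity of the weight) it is a probability density function on `(0,1)`. -/
theorem moments_of_hypergeometric_weight (a b c d : ℝ)
    (ha : 0 < a) (hb : 0 < b) (hc : 0 < c) (hd : 0 < d)
    (hcd : max a b < min c d) :
    (∀ n : ℕ, ∫ x in Set.Ioo (0 : ℝ) 1, x ^ n * W a b c d x =
      (poch a n * poch b n) / (poch c n * poch d n)) ∧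
    (∀ x ∈ Set.Ioo (0 : ℝ) 1, 0 ≤ W a b c d x) ∧
    (∫ x in Set.Ioo (0 : ℝ) 1, W a b c d x) = 1 := by
  have hac : a < c := (le_max_left a b).trans_lt (hcd.trans_le (min_le_left c d))
  have hbc : b < c := (le_max_right a b).trans_lt (hcd.trans_le (min_le_left c d))
  have hbd : b < d := (le_max_right a b).trans_lt (hcd.trans_le (min_le_right c d))
  have hδ : (0:ℝ) < c + d - a - b := by linarith
  refine ⟨fun n => moment_lemma a b c d ha hb hc hd hcd n, ?_, ?_⟩
  · intro x hx
    have hx0 : (0:ℝ) < x := hx.1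
    have hx1 : (0:ℝ) < 1 - x := by linarith [hx.2]
    have hF : 0 ≤ twoF1 (c - b) (d - b) (c + d - a - b) (1 - x) := by
      rw [twoF1]
      refine tsum_nonneg fun k => ?_
      have h1 := poch_nonneg (by linarith : (0:ℝ) ≤ c - b) k
      have h2 := poch_nonneg (by linarith : (0:ℝ) ≤ d - b) k
      have h3 := (poch_pos hδ k).le
      have h4 : (0:ℝ) ≤ (k.factorial : ℝ) := by positivity
      exact mul_nonneg (div_nonneg (mul_nonneg h1 h2) (mul_nonneg h3 h4))
        (pow_nonneg hx1.le k)
    have hΓa := Real.Gamma_pos_of_pos ha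
    have hΓb := Real.Gamma_pos_of_pos hb
    have hΓc := Real.Gamma_pos_of_pos hc
    have hΓd := Real.Gamma_pos_of_pos hd
    have hΓδ := Real.Gamma_pos_of_pos hδ
    rw [W]
    exact mul_nonneg (by positivity)
      (mul_nonneg (mul_nonneg (Real.rpow_nonneg hx0.le _) (Real.rpow_nonneg hx1.le _)) hF)
  · have h0 := moment_lemma a b c d ha hb hc hd hcd 0
    simp only [pow_zero, one_mul, poch_zero] at h0
    simpa using h0
end

section
/- Hahn property for the type II polynomials: for every n ∈ ℕ and every x, (d/dx) P_{n+1}(x;a,b;c,d) = (n+1) · P_n(x;a+1,b+1;d+1,c+2), i.e. the derivative of the (n+1)-st type II polynomial with parameters (a,b;c,d) equals (n+1) times the n-th type II polynomial with shifted parameters (a+1,b+1;d+1,c+2). -/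
/-- The type II multiple orthogonal polynomial of degree `n` on the step line,
`P_n(x;a,b;c,d) = Σ_{j=0}^{n} C(n,j)(−1)^j ((a+n−j)_j (b+n−j)_j) /
  ((c+⌊n/2⌋+n−j)_j (d+⌊(n−1)/2⌋+n−j)_j) · x^{n−j}`. -/
noncomputable def P (a b c d : ℝ) (n : ℕ) (x : ℝ) : ℝ :=
  ∑ j ∈ Finset.range (n + 1),
    (n.choose j : ℝ) * (-1 : ℝ) ^ j *
      (poch (a + n - j) j * poch (b + n - j) j) /
      (poch (c + (n / 2 : ℕ) + n - j) j * poch (d + ((n - 1) / 2 : ℕ) + n - j) j) *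
      x ^ (n - j)

/-- Hahn property for the type II polynomials:
`(d/dx) P_{n+1}(x;a,b;c,d) = (n+1) · P_n(x;a+1,b+1;d+1,c+2)`. -/
theorem hahn_property_typeII (a b c d : ℝ)
    (ha : 0 < a) (hb : 0 < b) (hc : 0 < c) (hd : 0 < d)
    (hcd : max a b < min c d) :
    ∀ (n : ℕ) (x : ℝ),
      deriv (P a b c d (n + 1)) x =
        (n + 1) * P (a + 1) (b + 1) (d + 1) (c + 2) n x := by
  intro n x
  have hderiv : HasDerivAt (P a b c d (n + 1))
      (∑ j ∈ Finset.range (n + 1 + 1),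
        ((n+1).choose j : ℝ) * (-1 : ℝ) ^ j *
          (poch (a + (n+1 : ℕ) - j) j * poch (b + (n+1 : ℕ) - j) j) /
          (poch (c + ((n+1) / 2 : ℕ) + (n+1 : ℕ) - j) j *
            poch (d + (((n+1) - 1) / 2 : ℕ) + (n+1 : ℕ) - j) j) *
          ((n + 1 - j : ℕ) * x ^ (n + 1 - j - 1))) x := by
    unfold P
    exact HasDerivAt.fun_sum fun j hj => (hasDerivAt_pow (n + 1 - j) x).const_mul _
  rw [hderiv.deriv, Finset.sum_range_succ]
  rw [show n + 1 - (n + 1) = 0 from Nat.sub_self _]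
  norm_num
  unfold P
  rw [Finset.mul_sum]
  refine Finset.sum_congr rfl fun j hj => ?_
  have hjn : j ≤ n := Nat.lt_succ_iff.mp (Finset.mem_range.mp hj)
  have hexp : n + 1 - j - 1 = n - j := by omega
  have h1 : a + ((n+1 : ℕ) : ℝ) - j = a + 1 + (n : ℝ) - j := by push_cast; ring
  have h2 : b + ((n+1 : ℕ) : ℝ) - j = b + 1 + (n : ℝ) - j := by push_cast; ring
  have h3 : d + (((n+1) - 1) / 2 : ℕ) + ((n+1 : ℕ) : ℝ) - j
      = d + 1 + ((n / 2 : ℕ) : ℝ) + (n : ℝ) - j := by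
    rw [show (n + 1) - 1 = n from rfl]; push_cast; ring
  have hchoose : (((n+1).choose j : ℕ) : ℝ) * ((n + 1 - j : ℕ) : ℝ)
      = ((n : ℝ) + 1) * (n.choose j : ℝ) := by
    have h : (n+1).choose j * (n + 1 - j) = (n + 1) * n.choose j := by
      rw [← Nat.choose_mul_succ_eq]; ring
    exact_mod_cast h
  rcases Nat.eq_zero_or_pos n with hn | hn
  · subst hn
    interval_cases j
    simp [poch]
  · have h4 : c + (((n+1) / 2 : ℕ) : ℝ) + ((n+1 : ℕ) : ℝ) - j
        = c + 2 + (((n - 1) / 2 : ℕ) : ℝ) + (n : ℝ) - j := by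
      have : (n + 1) / 2 = (n - 1) / 2 + 1 := by omega
      rw [this]; push_cast; ring
    simp only [Nat.add_sub_cancel] at h3
    push_cast at h1 h2 h3 h4
    rw [hexp, h1, h2, h3, h4]
    linear_combination ((-1 : ℝ)) ^ j *
      (poch (a + 1 + (n : ℝ) - j) j * poch (b + 1 + (n : ℝ) - j) j) /
      (poch (c + 2 + (((n - 1) / 2 : ℕ) : ℝ) + (n : ℝ) - j) j *
        poch (d + 1 + ((n / 2 : ℕ) : ℝ) + (n : ℝ) - j) j) *
      x ^ (n - j) * hchoose
end

section
/- Branched-continued-fraction form of the recurrence coefficients: assume additionally d ≠ 1. With λ_k as in the context and β_n, α_{n+1}, γ_{n+1} the recurrence coefficients from the third-order recurrence of the polynomials P_n(x;a,b;c,d), one has for every n ∈ ℕ: β_n = λ_{3n} + λ_{3n+1} + λ_{3n+2}; α_{n+1} = λ_{3n+1}λ_{3n+3} + λ_{3n+2}λ_{3n+3} + λ_{3n+2}λ_{3n+4}; and γ_{n+1} = λ_{3n+2} λ_{3n+4} λ_{3n+6}. Moreover λ_0 = λ_1 = 0 and λ_k > 0 for all k ≥ 2. -/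
/-- The auxiliary parameters `c'_m` (for integers `m ≥ -1`): `c'_{2k-1} = c + k` and
`c'_{2k} = d + k`. -/
noncomputable def cp (c d : ℝ) (m : ℤ) : ℝ :=
  if m % 2 = 0 then d + (m / 2 : ℤ) else c + ((m + 1) / 2 : ℤ)

/-- The recurrence coefficient `β_n`. -/
noncomputable def betaC (a b c d : ℝ) (n : ℕ) : ℝ :=
  ((n : ℝ) + 1) * (a + n) * (b + n) /
      ((cp c d ((n : ℤ) - 1) + n) * (cp c d (n : ℤ) + n)) -
    (n : ℝ) * (a + n - 1) * (b + n - 1) /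
      ((cp c d ((n : ℤ) - 1) + n - 1) * (cp c d (n : ℤ) + n - 2))

/-- The recurrence coefficient `α_{n+1}`. -/
noncomputable def alphaC (a b c d : ℝ) (n : ℕ) : ℝ :=
  (((n : ℝ) + 1) * (a + n) * (b + n) /
      ((cp c d ((n : ℤ) - 1) + n) * (cp c d (n : ℤ) + n))) *
    ((n : ℝ) * (a + n - 1) * (b + n - 1) /
        (2 * (cp c d ((n : ℤ) - 1) + n - 1) * (cp c d (n : ℤ) + n - 1)) -
      ((n : ℝ) + 1) * (a + n) * (b + n) /
        ((cp c d ((n : ℤ) - 1) + n) * (cp c d (n : ℤ) + n)) +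
      ((n : ℝ) + 2) * (a + n + 1) * (b + n + 1) /
        (2 * (cp c d ((n : ℤ) - 1) + n + 1) * (cp c d (n : ℤ) + n + 1)))

/-- The recurrence coefficient `γ_{n+1}`. -/
noncomputable def gammaC (a b c d : ℝ) (n : ℕ) : ℝ :=
  (poch ((n : ℝ) + 1) 2 * poch (a + n) 2 * poch (b + n) 2 *
      (cp c d (n : ℤ) - 1) * (cp c d (n : ℤ) - a) * (cp c d (n : ℤ) - b)) /
    (poch (cp c d ((n : ℤ) - 1) + n) 3 * poch (cp c d (n : ℤ) + n) 3 *
      poch (cp c d (n : ℤ) + n - 1) 3)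

/-- The branched-continued-fraction coefficients `λ_k`: for `k = 3n`, `3n+1`, `3n+2`
they are given by the three formulas of the paper. -/
noncomputable def lam (a b c d : ℝ) (k : ℕ) : ℝ :=
  let n : ℕ := k / 3
  if k % 3 = 0 then
    (n : ℝ) * (b + n - 1) * (cp c d (n : ℤ) - a - 1) /
      ((cp c d (n : ℤ) + n - 2) * (cp c d (n : ℤ) + n - 1) *
        (cp c d ((n : ℤ) - 1) + n - 1))
  else if k % 3 = 1 then
    (n : ℝ) * (a + n) * (cp c d ((n : ℤ) - 1) - b) /
      ((cp c d (n : ℤ) + n - 1) * (cp c d ((n : ℤ) - 1) + n - 1) *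
        (cp c d ((n : ℤ) - 1) + n))
  else
    (a + n) * (b + n) * (cp c d (n : ℤ) - 1) /
      ((cp c d (n : ℤ) + n - 1) * (cp c d (n : ℤ) + n) *
        (cp c d ((n : ℤ) - 1) + n))

lemma poch_two (z : ℝ) : poch z 2 = z * (z + 1) := by
  simp [poch, Finset.prod_range_succ]

lemma poch_three (z : ℝ) : poch z 3 = z * (z + 1) * (z + 2) := by
  simp [poch, Finset.prod_range_succ]

lemma cp_even (c d : ℝ) (k : ℤ) : cp c d (2 * k) = d + (k : ℝ) := by
  have h1 : (2 * k) % 2 = 0 := by omega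
  have h2 : (2 * k) / 2 = k := by omega
  simp [cp, h1, h2]

lemma cp_odd (c d : ℝ) (k : ℤ) : cp c d (2 * k - 1) = c + (k : ℝ) := by
  have h1 : (2 * k - 1) % 2 = 1 := by omega
  have h2 : (2 * k - 1 + 1) / 2 = k := by omega
  simp [cp, h1, h2]

lemma cp_add_two (c d : ℝ) (m : ℤ) : cp c d (m + 2) = cp c d m + 1 := by
  rcases Int.even_or_odd m with ⟨k, rfl⟩ | ⟨k, rfl⟩
  · rw [show k + k = 2 * k by ring, show 2 * k + 2 = 2 * (k + 1) by ring,
      cp_even, cp_even]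
    push_cast; ring
  · rw [show 2 * k + 1 = 2 * (k + 1) - 1 by ring,
      show 2 * (k + 1) - 1 + 2 = 2 * (k + 2) - 1 by ring, cp_odd, cp_odd]
    push_cast; ring

lemma cpE_pos (c d : ℝ) (hc : 0 < c) (hd : 0 < d) (n : ℕ) : 0 < cp c d n + n := by
  obtain ⟨m, rfl | rfl⟩ := Nat.even_or_odd' n
  · rw [show ((2 * m : ℕ) : ℤ) = 2 * (m : ℤ) by push_cast; ring, cp_even]
    have : (0:ℝ) ≤ m := Nat.cast_nonneg m
    push_cast; linarith
  · rw [show ((2 * m + 1 : ℕ) : ℤ) = 2 * ((m : ℤ) + 1) - 1 by push_cast; ring, cp_odd]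
    have : (0:ℝ) ≤ m := Nat.cast_nonneg m
    push_cast; linarith

lemma cpE1_pos (c d : ℝ) (hc : 0 < c) (hd : 0 < d) (n : ℕ) (hn : 1 ≤ n) :
    0 < cp c d n + n - 1 := by
  obtain ⟨m, rfl | rfl⟩ := Nat.even_or_odd' n
  · rw [show ((2 * m : ℕ) : ℤ) = 2 * (m : ℤ) by push_cast; ring, cp_even]
    have h1 : (1:ℝ) ≤ m := by exact_mod_cast Nat.one_le_cast.mpr (by omega)
    push_cast; linarith
  · rw [show ((2 * m + 1 : ℕ) : ℤ) = 2 * ((m : ℤ) + 1) - 1 by push_cast; ring, cp_odd]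
    have : (0:ℝ) ≤ m := Nat.cast_nonneg m
    push_cast; linarith

lemma cpE2_pos (c d : ℝ) (hc : 0 < c) (hd : 0 < d) (n : ℕ) (hn : 1 ≤ n) :
    0 < cp c d n + n - 2 := by
  obtain ⟨m, rfl | rfl⟩ := Nat.even_or_odd' n
  · rw [show ((2 * m : ℕ) : ℤ) = 2 * (m : ℤ) by push_cast; ring, cp_even]
    have h1 : (1:ℝ) ≤ m := by exact_mod_cast Nat.one_le_cast.mpr (by omega)
    push_cast; linarith
  · rw [show ((2 * m + 1 : ℕ) : ℤ) = 2 * ((m : ℤ) + 1) - 1 by push_cast; ring, cp_odd]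
    have : (0:ℝ) ≤ m := Nat.cast_nonneg m
    push_cast; linarith

lemma cpF_pos (c d : ℝ) (hc : 0 < c) (hd : 0 < d) (n : ℕ) :
    0 < cp c d ((n : ℤ) - 1) + n := by
  obtain ⟨m, rfl | rfl⟩ := Nat.even_or_odd' n
  · rw [show ((2 * m : ℕ) : ℤ) - 1 = 2 * (m : ℤ) - 1 by push_cast; ring, cp_odd]
    have : (0:ℝ) ≤ m := Nat.cast_nonneg m
    push_cast; linarith
  · rw [show ((2 * m + 1 : ℕ) : ℤ) - 1 = 2 * (m : ℤ) by push_cast; ring, cp_even]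
    have : (0:ℝ) ≤ m := Nat.cast_nonneg m
    push_cast; linarith

lemma cpF1_pos (c d : ℝ) (hc : 0 < c) (hd : 0 < d) (n : ℕ) (hn : 1 ≤ n) :
    0 < cp c d ((n : ℤ) - 1) + n - 1 := by
  obtain ⟨m, rfl | rfl⟩ := Nat.even_or_odd' n
  · rw [show ((2 * m : ℕ) : ℤ) - 1 = 2 * (m : ℤ) - 1 by push_cast; ring, cp_odd]
    have h1 : (1:ℝ) ≤ m := by exact_mod_cast Nat.one_le_cast.mpr (by omega)
    push_cast; linarith
  · rw [show ((2 * m + 1 : ℕ) : ℤ) - 1 = 2 * (m : ℤ) by push_cast; ring, cp_even]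
    have : (0:ℝ) ≤ m := Nat.cast_nonneg m
    push_cast; linarith

lemma cpE_gt (a c d : ℝ) (hac : a < c) (had : a < d) (n : ℕ) (hn : 1 ≤ n) :
    a + 1 < cp c d n := by
  obtain ⟨m, rfl | rfl⟩ := Nat.even_or_odd' n
  · rw [show ((2 * m : ℕ) : ℤ) = 2 * (m : ℤ) by push_cast; ring, cp_even]
    have h1 : (1:ℝ) ≤ m := by exact_mod_cast Nat.one_le_cast.mpr (by omega)
    push_cast; linarith
  · rw [show ((2 * m + 1 : ℕ) : ℤ) = 2 * ((m : ℤ) + 1) - 1 by push_cast; ring, cp_odd]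
    have : (0:ℝ) ≤ m := Nat.cast_nonneg m
    push_cast; linarith

lemma cpF_gt (b c d : ℝ) (hbc : b < c) (hbd : b < d) (n : ℕ) :
    b < cp c d ((n : ℤ) - 1) := by
  obtain ⟨m, rfl | rfl⟩ := Nat.even_or_odd' n
  · rw [show ((2 * m : ℕ) : ℤ) - 1 = 2 * (m : ℤ) - 1 by push_cast; ring, cp_odd]
    have : (0:ℝ) ≤ m := Nat.cast_nonneg m
    push_cast; linarith
  · rw [show ((2 * m + 1 : ℕ) : ℤ) - 1 = 2 * (m : ℤ) by push_cast; ring, cp_even]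
    have : (0:ℝ) ≤ m := Nat.cast_nonneg m
    push_cast; linarith

lemma cpE_gt1 (c d : ℝ) (hc : 0 < c) (hd : 0 < d) (n : ℕ) (hn : 1 ≤ n) :
    1 < cp c d n := by
  obtain ⟨m, rfl | rfl⟩ := Nat.even_or_odd' n
  · rw [show ((2 * m : ℕ) : ℤ) = 2 * (m : ℤ) by push_cast; ring, cp_even]
    have h1 : (1:ℝ) ≤ m := by exact_mod_cast Nat.one_le_cast.mpr (by omega)
    push_cast; linarith
  · rw [show ((2 * m + 1 : ℕ) : ℤ) = 2 * ((m : ℤ) + 1) - 1 by push_cast; ring, cp_odd]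
    have : (0:ℝ) ≤ m := Nat.cast_nonneg m
    push_cast; linarith

lemma cp_zero (c d : ℝ) : cp c d ((0 : ℕ) : ℤ) = d := by
  rw [show ((0 : ℕ) : ℤ) = 2 * 0 by norm_num, cp_even]; norm_num

lemma cp_neg_one (c d : ℝ) : cp c d (((0 : ℕ) : ℤ) - 1) = c := by
  rw [show ((0 : ℕ) : ℤ) - 1 = 2 * 0 - 1 by norm_num, cp_odd]; norm_num

lemma cp_one (c d : ℝ) : cp c d ((1 : ℕ) : ℤ) = c + 1 := by
  rw [show ((1 : ℕ) : ℤ) = 2 * 1 - 1 by norm_num, cp_odd]; norm_num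

lemma cp_one' (c d : ℝ) : cp c d (((1 : ℕ) : ℤ) - 1) = d := by
  rw [show ((1 : ℕ) : ℤ) - 1 = 2 * 0 by norm_num, cp_even]; norm_num

lemma lam_mod0 (a b c d : ℝ) (n : ℕ) : lam a b c d (3 * n) =
    (n : ℝ) * (b + n - 1) * (cp c d (n : ℤ) - a - 1) /
      ((cp c d (n : ℤ) + n - 2) * (cp c d (n : ℤ) + n - 1) *
        (cp c d ((n : ℤ) - 1) + n - 1)) := by
  have h1 : 3 * n % 3 = 0 := by omega
  have h2 : 3 * n / 3 = n := by omega
  simp only [lam, h1, h2, if_true]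

lemma lam_mod1 (a b c d : ℝ) (n : ℕ) : lam a b c d (3 * n + 1) =
    (n : ℝ) * (a + n) * (cp c d ((n : ℤ) - 1) - b) /
      ((cp c d (n : ℤ) + n - 1) * (cp c d ((n : ℤ) - 1) + n - 1) *
        (cp c d ((n : ℤ) - 1) + n)) := by
  have h1 : (3 * n + 1) % 3 = 1 := by omega
  have h2 : (3 * n + 1) / 3 = n := by omega
  simp only [lam, h1, h2]
  norm_num

lemma lam_mod2 (a b c d : ℝ) (n : ℕ) : lam a b c d (3 * n + 2) =
    (a + n) * (b + n) * (cp c d (n : ℤ) - 1) /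
      ((cp c d (n : ℤ) + n - 1) * (cp c d (n : ℤ) + n) *
        (cp c d ((n : ℤ) - 1) + n)) := by
  have h1 : (3 * n + 2) % 3 = 2 := by omega
  have h2 : (3 * n + 2) / 3 = n := by omega
  simp only [lam, h1, h2]
  norm_num

lemma beta_key (a b e f N : ℝ) (h1 : e + N - 2 ≠ 0) (h2 : e + N - 1 ≠ 0)
    (h3 : e + N ≠ 0) (h4 : f + N - 1 ≠ 0) (h5 : f + N ≠ 0) :
    (N + 1) * (a + N) * (b + N) / ((f + N) * (e + N)) -
      N * (a + N - 1) * (b + N - 1) / ((f + N - 1) * (e + N - 2)) =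
    N * (b + N - 1) * (e - a - 1) / ((e + N - 2) * (e + N - 1) * (f + N - 1)) +
      N * (a + N) * (f - b) / ((e + N - 1) * (f + N - 1) * (f + N)) +
      (a + N) * (b + N) * (e - 1) / ((e + N - 1) * (e + N) * (f + N)) := by
  field_simp
  ring

lemma alpha_key (a b e f N : ℝ) (h2 : e + N - 1 ≠ 0) (h3 : e + N ≠ 0)
    (h3' : e + N + 1 ≠ 0) (h4 : f + N - 1 ≠ 0) (h5 : f + N ≠ 0)
    (h5' : f + N + 1 ≠ 0) :
    (N + 1) * (a + N) * (b + N) / ((f + N) * (e + N)) *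
      (N * (a + N - 1) * (b + N - 1) / (2 * (f + N - 1) * (e + N - 1)) -
        (N + 1) * (a + N) * (b + N) / ((f + N) * (e + N)) +
        (N + 2) * (a + N + 1) * (b + N + 1) / (2 * (f + N + 1) * (e + N + 1))) =
    N * (a + N) * (f - b) / ((e + N - 1) * (f + N - 1) * (f + N)) *
        ((N + 1) * (b + (N + 1) - 1) * (f + 1 - a - 1) /
          ((f + 1 + (N + 1) - 2) * (f + 1 + (N + 1) - 1) * (e + (N + 1) - 1))) +
      (a + N) * (b + N) * (e - 1) / ((e + N - 1) * (e + N) * (f + N)) *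
        ((N + 1) * (b + (N + 1) - 1) * (f + 1 - a - 1) /
          ((f + 1 + (N + 1) - 2) * (f + 1 + (N + 1) - 1) * (e + (N + 1) - 1))) +
      (a + N) * (b + N) * (e - 1) / ((e + N - 1) * (e + N) * (f + N)) *
        ((N + 1) * (a + (N + 1)) * (e - b) /
          ((f + 1 + (N + 1) - 1) * (e + (N + 1) - 1) * (e + (N + 1)))) := by
  rw [show f + 1 + (N + 1) - 2 = f + N by ring,
    show f + 1 + (N + 1) - 1 = f + N + 1 by ring,
    show e + (N + 1) - 1 = e + N by ring,
    show e + (N + 1) = e + N + 1 by ring,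
    show b + (N + 1) - 1 = b + N by ring,
    show f + 1 - a - 1 = f - a by ring,
    show a + (N + 1) = a + N + 1 by ring]
  have h2R : (2 : ℝ) ≠ 0 := two_ne_zero
  set D : ℝ := 2 * (e + N - 1) * (e + N) * (e + N) * (e + N + 1) * (f + N - 1) *
      (f + N) * (f + N) * (f + N + 1) with hDdef
  have hm1 : (e + N) * (e + N + 1) * (f + N) * (f + N + 1) ≠ 0 :=
    mul_ne_zero (mul_ne_zero (mul_ne_zero h3 h3') h5) h5'
  have hm2 : 2 * (e + N - 1) * (e + N + 1) * (f + N - 1) * (f + N + 1) ≠ 0 :=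
    mul_ne_zero (mul_ne_zero (mul_ne_zero (mul_ne_zero h2R h2) h3') h4) h5'
  have hm3 : (e + N - 1) * (e + N) * (f + N - 1) * (f + N) ≠ 0 :=
    mul_ne_zero (mul_ne_zero (mul_ne_zero h2 h3) h4) h5
  have hn1 : 2 * (e + N) * (e + N + 1) ≠ 0 :=
    mul_ne_zero (mul_ne_zero h2R h3) h3'
  have hn2 : 2 * (e + N + 1) * (f + N - 1) ≠ 0 :=
    mul_ne_zero (mul_ne_zero h2R h3') h4
  have hn3 : 2 * (f + N - 1) * (f + N) ≠ 0 :=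
    mul_ne_zero (mul_ne_zero h2R h4) h5
  have s1 : (N + 1) * (a + N) * (b + N) / ((f + N) * (e + N)) *
      (N * (a + N - 1) * (b + N - 1) / (2 * (f + N - 1) * (e + N - 1))) =
      (N + 1) * (a + N) * (b + N) * (N * (a + N - 1) * (b + N - 1)) *
        ((e + N) * (e + N + 1) * (f + N) * (f + N + 1)) / D := by
    rw [div_mul_div_comm, ← mul_div_mul_right _ _ hm1]
    congr 1
    rw [hDdef]; ring
  have s2 : (N + 1) * (a + N) * (b + N) / ((f + N) * (e + N)) *
      ((N + 1) * (a + N) * (b + N) / ((f + N) * (e + N))) =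
      (N + 1) * (a + N) * (b + N) * ((N + 1) * (a + N) * (b + N)) *
        (2 * (e + N - 1) * (e + N + 1) * (f + N - 1) * (f + N + 1)) / D := by
    rw [div_mul_div_comm, ← mul_div_mul_right _ _ hm2]
    congr 1
    rw [hDdef]; ring
  have s3 : (N + 1) * (a + N) * (b + N) / ((f + N) * (e + N)) *
      ((N + 2) * (a + N + 1) * (b + N + 1) / (2 * (f + N + 1) * (e + N + 1))) =
      (N + 1) * (a + N) * (b + N) * ((N + 2) * (a + N + 1) * (b + N + 1)) *
        ((e + N - 1) * (e + N) * (f + N - 1) * (f + N)) / D := by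
    rw [div_mul_div_comm, ← mul_div_mul_right _ _ hm3]
    congr 1
    rw [hDdef]; ring
  have r1 : N * (a + N) * (f - b) / ((e + N - 1) * (f + N - 1) * (f + N)) *
      ((N + 1) * (b + N) * (f - a) / ((f + N) * (f + N + 1) * (e + N))) =
      N * (a + N) * (f - b) * ((N + 1) * (b + N) * (f - a)) *
        (2 * (e + N) * (e + N + 1)) / D := by
    rw [div_mul_div_comm, ← mul_div_mul_right _ _ hn1]
    congr 1
    rw [hDdef]; ring
  have r2 : (a + N) * (b + N) * (e - 1) / ((e + N - 1) * (e + N) * (f + N)) *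
      ((N + 1) * (b + N) * (f - a) / ((f + N) * (f + N + 1) * (e + N))) =
      (a + N) * (b + N) * (e - 1) * ((N + 1) * (b + N) * (f - a)) *
        (2 * (e + N + 1) * (f + N - 1)) / D := by
    rw [div_mul_div_comm, ← mul_div_mul_right _ _ hn2]
    congr 1
    rw [hDdef]; ring
  have r3 : (a + N) * (b + N) * (e - 1) / ((e + N - 1) * (e + N) * (f + N)) *
      ((N + 1) * (a + N + 1) * (e - b) / ((f + N + 1) * (e + N) * (e + N + 1))) =
      (a + N) * (b + N) * (e - 1) * ((N + 1) * (a + N + 1) * (e - b)) *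
        (2 * (f + N - 1) * (f + N)) / D := by
    rw [div_mul_div_comm, ← mul_div_mul_right _ _ hn3]
    congr 1
    rw [hDdef]; ring
  rw [mul_add, mul_sub, s1, s2, s3, r1, r2, r3, div_sub_div_same,
    ← add_div, ← add_div, ← add_div]
  congr 1
  ring

set_option maxHeartbeats 1000000 in
/-- Branched-continued-fraction form of the recurrence coefficients:
`β_n = λ_{3n} + λ_{3n+1} + λ_{3n+2}`,
`α_{n+1} = λ_{3n+1}λ_{3n+3} + λ_{3n+2}λ_{3n+3} + λ_{3n+2}λ_{3n+4}`,
`γ_{n+1} = λ_{3n+2}λ_{3n+4}λ_{3n+6}`; moreover `λ_0 = λ_1 = 0` and `λ_k > 0` for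
`k ≥ 2`. -/
theorem bcf_form_of_recurrence_coefficients (a b c d : ℝ)
    (ha : 0 < a) (hb : 0 < b) (hc : 0 < c) (hd : 0 < d)
    (hcd : max a b < min c d) (hd1 : d ≠ 1) :
    (∀ n : ℕ, betaC a b c d n =
      lam a b c d (3 * n) + lam a b c d (3 * n + 1) + lam a b c d (3 * n + 2)) ∧
    (∀ n : ℕ, alphaC a b c d n =
      lam a b c d (3 * n + 1) * lam a b c d (3 * n + 3) +
        lam a b c d (3 * n + 2) * lam a b c d (3 * n + 3) +
        lam a b c d (3 * n + 2) * lam a b c d (3 * n + 4)) ∧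
    (∀ n : ℕ, gammaC a b c d n =
      lam a b c d (3 * n + 2) * lam a b c d (3 * n + 4) * lam a b c d (3 * n + 6)) ∧
    lam a b c d 0 = 0 ∧ lam a b c d 1 = 0 ∧
    (∀ k : ℕ, 2 ≤ k → 0 < lam a b c d k) := by
  have hac : a < c := lt_of_le_of_lt (le_max_left a b) (lt_of_lt_of_le hcd (min_le_left c d))
  have had : a < d := lt_of_le_of_lt (le_max_left a b) (lt_of_lt_of_le hcd (min_le_right c d))
  have hbc : b < c := lt_of_le_of_lt (le_max_right a b) (lt_of_lt_of_le hcd (min_le_left c d))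
  have hbd : b < d := lt_of_le_of_lt (le_max_right a b) (lt_of_lt_of_le hcd (min_le_right c d))
  have hd1' : d - 1 ≠ 0 := sub_ne_zero.mpr hd1
  refine ⟨?_, ?_, ?_, ?_, ?_, ?_⟩
  · -- beta
    intro n
    rcases n with _ | k
    · rw [lam_mod0, lam_mod1, lam_mod2]
      unfold betaC
      rw [cp_zero, cp_neg_one]
      push_cast
      norm_num
      rw [div_eq_div_iff (by positivity) (by
        exact mul_ne_zero (mul_ne_zero hd1' hd.ne') hc.ne')]
      ring
    · rw [lam_mod0, lam_mod1, lam_mod2]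
      unfold betaC
      exact beta_key a b _ _ _
        (cpE2_pos c d hc hd (k + 1) (by omega)).ne'
        (cpE1_pos c d hc hd (k + 1) (by omega)).ne'
        (cpE_pos c d hc hd (k + 1)).ne'
        (cpF1_pos c d hc hd (k + 1) (by omega)).ne'
        (cpF_pos c d hc hd (k + 1)).ne'
  · -- alpha
    intro n
    rcases n with _ | k
    · rw [show 3 * 0 + 3 = 3 * 1 by norm_num, show 3 * 0 + 4 = 3 * 1 + 1 by norm_num]
      rw [lam_mod1, lam_mod2, lam_mod0, lam_mod1]
      unfold alphaC
      rw [cp_zero, cp_neg_one, cp_one, cp_one']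
      rw [show ((0:ℕ):ℝ) = 0 by norm_num, show ((1:ℕ):ℝ) = 1 by norm_num]
      rw [show a + (0:ℝ) = a by ring, show b + (0:ℝ) = b by ring,
        show c + (0:ℝ) = c by ring, show d + (0:ℝ) = d by ring,
        show (0:ℝ) + 1 = 1 by ring, show (0:ℝ) + 2 = 2 by ring,
        show b + 1 - 1 = b by ring, show c + 1 - a - 1 = c - a by ring,
        show c + 1 + 1 - 2 = c by ring, show c + 1 + 1 - 1 = c + 1 by ring,
        show d + 1 - 1 = d by ring]
      rw [show (0:ℝ) * (a - 1) * (b - 1) = 0 by ring, zero_div]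
      rw [show (0:ℝ) * a * (c - b) = 0 by ring, zero_div, zero_mul, zero_add]
      have hcc1 : c + 1 ≠ 0 := by positivity
      have hdd1 : d + 1 ≠ 0 := by positivity
      field_simp [hd1']
      ring
    · rw [show 3 * (k + 1) + 3 = 3 * (k + 2) by ring,
        show 3 * (k + 1) + 4 = 3 * (k + 2) + 1 by ring]
      rw [lam_mod1, lam_mod2, lam_mod0, lam_mod1]
      rw [show ((k + 2 : ℕ) : ℤ) = (((k + 1 : ℕ) : ℤ) - 1) + 2 by push_cast; ring,
        cp_add_two]
      rw [show (((k + 1 : ℕ) : ℤ) - 1) + 2 - 1 = ((k + 1 : ℕ) : ℤ) by push_cast; ring]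
      rw [show ((k + 2 : ℕ) : ℝ) = ((k + 1 : ℕ) : ℝ) + 1 by push_cast; ring]
      unfold alphaC
      exact alpha_key a b _ _ _
        (cpE1_pos c d hc hd (k + 1) (by omega)).ne'
        (cpE_pos c d hc hd (k + 1)).ne'
        (by have := cpE_pos c d hc hd (k + 1); intro h; apply this.ne'; linarith)
        (cpF1_pos c d hc hd (k + 1) (by omega)).ne'
        (cpF_pos c d hc hd (k + 1)).ne'
        (by have := cpF_pos c d hc hd (k + 1); intro h; apply this.ne'; linarith)
  · -- gamma
    intro n
    rw [show 3 * n + 4 = 3 * (n + 1) + 1 by ring, show 3 * n + 6 = 3 * (n + 2) by ring]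
    rw [lam_mod2, lam_mod1, lam_mod0]
    rw [show ((n + 1 : ℕ) : ℤ) = (((n : ℕ) : ℤ) - 1) + 2 by push_cast; ring,
      cp_add_two]
    rw [show ((((n : ℕ) : ℤ) - 1) + 2) - 1 = ((n : ℕ) : ℤ) by ring]
    rw [show ((n + 2 : ℕ) : ℤ) = ((n : ℕ) : ℤ) + 2 by push_cast; ring, cp_add_two]
    rw [show (((n : ℕ) : ℤ) + 2) - 1 = (((n : ℕ) : ℤ) - 1) + 2 by ring, cp_add_two]
    rw [show ((n + 1 : ℕ) : ℝ) = ((n : ℕ) : ℝ) + 1 by push_cast; ring,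
      show ((n + 2 : ℕ) : ℝ) = ((n : ℕ) : ℝ) + 2 by push_cast; ring]
    unfold gammaC
    simp only [poch_two, poch_three]
    rw [div_mul_div_comm, div_mul_div_comm]
    congr 1
    · ring
    · ring
  · -- lam 0 = 0
    rw [show (0 : ℕ) = 3 * 0 by norm_num, lam_mod0]
    norm_num
  · -- lam 1 = 0
    rw [show (1 : ℕ) = 3 * 0 + 1 by norm_num, lam_mod1]
    norm_num
  · -- positivity
    intro k hk
    have h3 : k % 3 = 0 ∨ k % 3 = 1 ∨ k % 3 = 2 := by omega
    rcases h3 with h | h | h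
    · obtain ⟨n, rfl⟩ : ∃ n, k = 3 * n := ⟨k / 3, by omega⟩
      have hn1 : 1 ≤ n := by omega
      have hN1 : (1 : ℝ) ≤ (n : ℝ) := by exact_mod_cast hn1
      rw [lam_mod0]
      apply div_pos
      · have hEa := cpE_gt a c d hac had n hn1
        apply mul_pos (mul_pos (by linarith) (by linarith))
        linarith
      · exact mul_pos (mul_pos (cpE2_pos c d hc hd n hn1) (cpE1_pos c d hc hd n hn1))
          (cpF1_pos c d hc hd n hn1)
    · obtain ⟨n, rfl⟩ : ∃ n, k = 3 * n + 1 := ⟨k / 3, by omega⟩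
      have hn1 : 1 ≤ n := by omega
      have hN1 : (1 : ℝ) ≤ (n : ℝ) := by exact_mod_cast hn1
      rw [lam_mod1]
      apply div_pos
      · have hF := cpF_gt b c d hbc hbd n
        apply mul_pos (mul_pos (by linarith) (by linarith))
        linarith
      · exact mul_pos (mul_pos (cpE1_pos c d hc hd n hn1) (cpF1_pos c d hc hd n hn1))
          (cpF_pos c d hc hd n)
    · obtain ⟨n, rfl⟩ : ∃ n, k = 3 * n + 2 := ⟨k / 3, by omega⟩
      rcases n with _ | m
      · rw [lam_mod2, cp_zero, cp_neg_one]
        rw [show ((0:ℕ):ℝ) = 0 by norm_num]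
        rw [show a + (0:ℝ) = a by ring, show b + (0:ℝ) = b by ring,
          show c + (0:ℝ) = c by ring, show d + (0:ℝ) = d by ring]
        rcases hd1'.lt_or_gt with hlt | hgt
        · apply div_pos_of_neg_of_neg
          · exact mul_neg_of_pos_of_neg (mul_pos ha hb) hlt
          · exact mul_neg_of_neg_of_pos (mul_neg_of_neg_of_pos hlt hd) hc
        · exact div_pos (mul_pos (mul_pos ha hb) hgt)
            (mul_pos (mul_pos hgt hd) hc)
      · have hn1 : 1 ≤ m + 1 := by omega
        have hN0 : (0 : ℝ) ≤ ((m + 1 : ℕ) : ℝ) := Nat.cast_nonneg _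
        rw [lam_mod2]
        apply div_pos
        · have hE1 := cpE_gt1 c d hc hd (m + 1) hn1
          apply mul_pos (mul_pos (by linarith) (by linarith))
          linarith
        · exact mul_pos (mul_pos (cpE1_pos c d hc hd (m + 1) hn1)
            (cpE_pos c d hc hd (m + 1))) (cpF_pos c d hc hd (m + 1))
end

section
/- Mehler–Heine asymptotic formula near the origin: for every z ∈ ℂ, lim_{n→∞} (−1)^n · ( (c+⌊n/2⌋)_n (d+⌊(n−1)/2⌋)_n ) / ( (a)_n (b)_n ) · P_n(z/n³; a,b;c,d) = ₀F₂(−; a, b; −z/4) := Σ_{k=0}^∞ (−z/4)^k / ( (a)_k (b)_k k! ), and the convergence is uniform on compact subsets of ℂ. -/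
/-- Complex Pochhammer symbol `(z)_n = z (z+1) ⋯ (z+n-1)`. -/
noncomputable def pochC (z : ℂ) (n : ℕ) : ℂ := ∏ i ∈ Finset.range n, (z + i)

/-- The type II multiple orthogonal polynomial of degree `n` on the step line,
regarded as a polynomial function of a complex variable. -/
noncomputable def PC (a b c d : ℝ) (n : ℕ) (z : ℂ) : ℂ :=
  ∑ j ∈ Finset.range (n + 1),
    (n.choose j : ℂ) * (-1 : ℂ) ^ j *
      (pochC ((a : ℂ) + n - j) j * pochC ((b : ℂ) + n - j) j) /
      (pochC ((c : ℂ) + (n / 2 : ℕ) + n - j) j *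
        pochC ((d : ℂ) + ((n - 1) / 2 : ℕ) + n - j) j) *
      z ^ (n - j)

/-- The generalised hypergeometric series `₀F₂(−; a, b; w) = Σ w^k/((a)_k (b)_k k!)`. -/
noncomputable def F02 (a b : ℝ) (w : ℂ) : ℂ :=
  ∑' k : ℕ, w ^ k / (pochC a k * pochC b k * (k.factorial : ℂ))

open Filter

noncomputable def pochR (x : ℝ) (n : ℕ) : ℝ := ∏ i ∈ Finset.range n, (x + i)

lemma pochC_coe (x : ℝ) (n : ℕ) : pochC (x : ℂ) n = ((pochR x n : ℝ) : ℂ) := by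
  simp [pochC, pochR]

lemma pochR_pos {x : ℝ} (hx : 0 < x) (n : ℕ) : 0 < pochR x n :=
  Finset.prod_pos fun i _ => by positivity

lemma pochC_add (x : ℂ) (k m : ℕ) : pochC x (k + m) = pochC x k * pochC (x + k) m := by
  rw [pochC, Finset.prod_range_add]
  congr 1
  apply Finset.prod_congr rfl
  intro i _
  push_cast
  ring

lemma pochC_cast_ne_zero {x : ℝ} (hx : 0 < x) (n : ℕ) : pochC (x : ℂ) n ≠ 0 := by
  rw [pochC_coe]
  exact_mod_cast (pochR_pos hx n).ne'

lemma pochC_add_nat_ne_zero {x : ℝ} (hx : 0 < x) (m k j : ℕ) :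
    pochC ((x : ℂ) + m + k) j ≠ 0 := by
  have h : ((x : ℂ) + m + k) = ((x + m + k : ℝ) : ℂ) := by push_cast; ring
  rw [h]; exact pochC_cast_ne_zero (by positivity) j

lemma pochC_add_nat_ne_zero' {x : ℝ} (hx : 0 < x) (k j : ℕ) :
    pochC ((x : ℂ) + k) j ≠ 0 := by
  have h : ((x : ℂ) + k) = ((x + k : ℝ) : ℂ) := by push_cast; ring
  rw [h]; exact pochC_cast_ne_zero (by positivity) j

/-- The coefficient of `z^k` in the rescaled polynomial. -/
noncomputable def tcoef (a b c d : ℝ) (n k : ℕ) : ℝ :=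
  (-1) ^ k * (n.choose k) * pochR (c + (n / 2 : ℕ)) k * pochR (d + ((n - 1) / 2 : ℕ)) k /
    ((n : ℝ) ^ (3 * k) * pochR a k * pochR b k)

lemma key_identity (a b c d : ℝ) (ha : 0 < a) (hb : 0 < b) (hc : 0 < c) (hd : 0 < d)
    (n : ℕ) (z : ℂ) :
    (-1 : ℂ) ^ n *
        (pochC ((c : ℂ) + (n / 2 : ℕ)) n * pochC ((d : ℂ) + ((n - 1) / 2 : ℕ)) n) /
        (pochC (a : ℂ) n * pochC (b : ℂ) n) *
        PC a b c d n (z / (n : ℂ) ^ 3)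
      = ∑ k ∈ Finset.range (n + 1), ((tcoef a b c d n k : ℝ) : ℂ) * z ^ k := by
  rcases Nat.eq_zero_or_pos n with rfl | hn
  · simp [PC, pochC, tcoef, pochR]
  unfold PC
  rw [Finset.mul_sum, ← Finset.sum_range_reflect]
  apply Finset.sum_congr rfl
  intro k hk
  have hk' : k ≤ n := Nat.lt_succ_iff.mp (Finset.mem_range.mp hk)
  simp only [Nat.add_sub_cancel]
  rw [Nat.choose_symm hk', Nat.sub_sub_self hk', Nat.cast_sub hk']
  have harg : ∀ w : ℂ, w + (n : ℂ) - ((n : ℂ) - (k : ℂ)) = w + (k : ℂ) := fun w => by ring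
  simp only [harg]
  have hsplit : ∀ x : ℂ, pochC x n = pochC x k * pochC (x + k) (n - k) := by
    intro x
    conv_lhs => rw [← Nat.add_sub_cancel' hk']
    exact pochC_add x k (n - k)
  simp only [hsplit]
  have htc : ((tcoef a b c d n k : ℝ) : ℂ) =
      (-1) ^ k * (n.choose k : ℂ) * pochC ((c : ℂ) + (n / 2 : ℕ)) k *
        pochC ((d : ℂ) + ((n - 1) / 2 : ℕ)) k /
        ((n : ℂ) ^ (3 * k) * pochC (a : ℂ) k * pochC (b : ℂ) k) := by
    have hcoe2 : ∀ (x : ℝ) (m j : ℕ), ((pochR (x + m) j : ℝ) : ℂ) = pochC ((x : ℂ) + m) j := by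
      intro x m j
      rw [← pochC_coe]
      norm_cast
    rw [tcoef]
    push_cast
    rw [hcoe2 c, hcoe2 d, ← pochC_coe, ← pochC_coe]
  rw [htc, div_pow, ← pow_mul]
  have hA := pochC_cast_ne_zero ha k
  have hB := pochC_cast_ne_zero hb k
  have hA2 := pochC_add_nat_ne_zero' ha k (n - k)
  have hB2 := pochC_add_nat_ne_zero' hb k (n - k)
  have hC2 := pochC_add_nat_ne_zero hc (n / 2) k (n - k)
  have hD2 := pochC_add_nat_ne_zero hd ((n - 1) / 2) k (n - k)
  have hnz : (n : ℂ) ≠ 0 := Nat.cast_ne_zero.mpr hn.ne'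
  rcases Nat.even_or_odd n with hpn | hpn <;> rcases Nat.even_or_odd k with hpk | hpk
  · rw [hpn.neg_one_pow, hpk.neg_one_pow, ((Nat.even_sub hk').mpr (iff_of_true hpn hpk)).neg_one_pow]
    field_simp
  · rw [hpn.neg_one_pow, hpk.neg_one_pow, (Nat.Even.sub_odd hk' hpn hpk).neg_one_pow]
    field_simp
  · rw [hpn.neg_one_pow, hpk.neg_one_pow, (Nat.Odd.sub_even hk' hpn hpk).neg_one_pow]
    field_simp
  · rw [hpn.neg_one_pow, hpk.neg_one_pow, (Nat.Odd.sub_odd hpn hpk).neg_one_pow]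
    field_simp


noncomputable def climit (a b : ℝ) (k : ℕ) : ℝ :=
  (-1) ^ k / (4 ^ k * pochR a k * pochR b k * k.factorial)

lemma half_tendsto (g : ℕ → ℕ) (h1 : ∀ n, n ≤ 2 * g n + 4) (h2 : ∀ n, 2 * g n ≤ n) :
    Tendsto (fun n : ℕ => (g n : ℝ) / n) atTop (nhds (1 / 2)) := by
  apply tendsto_of_tendsto_of_tendsto_of_le_of_le'
      (g := fun n : ℕ => 1 / 2 - 2 / (n : ℝ)) (h := fun _ : ℕ => (1 / 2 : ℝ))
  · have h := (tendsto_const_nhds (x := (1 / 2 : ℝ)) (f := atTop (α := ℕ))).sub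
      (tendsto_const_div_atTop_nhds_zero_nat 2)
    simpa using h
  · exact tendsto_const_nhds
  · filter_upwards [eventually_ge_atTop 1] with n hn
    have hn0 : (0 : ℝ) < n := by exact_mod_cast hn
    have hcast : (n : ℝ) ≤ 2 * (g n : ℝ) + 4 := by exact_mod_cast h1 n
    rw [sub_le_iff_le_add, ← add_div, le_div_iff₀ hn0]
    linarith
  · filter_upwards [eventually_ge_atTop 1] with n hn
    have hn0 : (0 : ℝ) < n := by exact_mod_cast hn
    rw [div_le_iff₀ hn0]
    have : 2 * (g n : ℝ) ≤ n := by exact_mod_cast h2 n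
    linarith

lemma tcoef_tendsto (a b c d : ℝ) (ha : 0 < a) (hb : 0 < b) (hc : 0 < c) (hd : 0 < d) (k : ℕ) :
    Tendsto (fun n => tcoef a b c d n k) atTop (nhds (climit a b k)) := by
  have hpa := pochR_pos ha k
  have hpb := pochR_pos hb k
  have hkf : (0 : ℝ) < k.factorial := by exact_mod_cast k.factorial_pos
  have hhalf1 : Tendsto (fun n : ℕ => ((n / 2 : ℕ) : ℝ) / n) atTop (nhds (1 / 2)) :=
    half_tendsto (fun n => n / 2) (fun n => by change n ≤ 2 * (n / 2) + 4; omega) (fun n => by change 2 * (n / 2) ≤ n; omega)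
  have hhalf2 : Tendsto (fun n : ℕ => (((n - 1) / 2 : ℕ) : ℝ) / n) atTop (nhds (1 / 2)) :=
    half_tendsto (fun n => (n - 1) / 2) (fun n => by change n ≤ 2 * ((n - 1) / 2) + 4; omega) (fun n => by change 2 * ((n - 1) / 2) ≤ n; omega)
  have hprod1 : Tendsto (fun n : ℕ => ∏ i ∈ Finset.range k, (((n : ℝ) - i) / n)) atTop
      (nhds 1) := by
    have h := tendsto_finset_prod (Finset.range k)
        (f := fun (i : ℕ) (n : ℕ) => ((n : ℝ) - i) / n) (a := fun _ => (1 : ℝ)) (x := atTop) ?_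
    · simpa using h
    · intro i _
      have h0 : Tendsto (fun n : ℕ => 1 - (i : ℝ) / n) atTop (nhds 1) := by
        have h := (tendsto_const_nhds (x := (1 : ℝ)) (f := atTop (α := ℕ))).sub
          (tendsto_const_div_atTop_nhds_zero_nat (i : ℝ))
        simpa using h
      apply h0.congr'
      filter_upwards [eventually_ge_atTop 1] with n hn
      have hn0 : (n : ℝ) ≠ 0 := by
        have : (0 : ℝ) < n := by exact_mod_cast hn
        exact this.ne'
      field_simp
  have hp2 : ∀ (x : ℝ) (g : ℕ → ℕ), Tendsto (fun n : ℕ => (g n : ℝ) / n) atTop (nhds (1 / 2)) →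
      Tendsto (fun n : ℕ => ∏ i ∈ Finset.range k, ((x + (g n : ℕ) + i) / (n : ℝ))) atTop
        (nhds ((1 / 2) ^ k)) := by
    intro x g hg
    have h := tendsto_finset_prod (Finset.range k)
        (f := fun (i : ℕ) (n : ℕ) => (x + (g n : ℕ) + i) / (n : ℝ)) (a := fun _ => (1 / 2 : ℝ)) (x := atTop) ?_
    · simpa using h
    · intro i _
      have h1 : Tendsto (fun n : ℕ => x / n + (g n : ℝ) / n + (i : ℝ) / n) atTop
          (nhds (0 + 1 / 2 + 0)) :=
        ((tendsto_const_div_atTop_nhds_zero_nat x).add hg).add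
          (tendsto_const_div_atTop_nhds_zero_nat (i : ℝ))
      norm_num at h1
      exact h1.congr fun n => by ring
  have hmain : Tendsto (fun n : ℕ =>
      (-1 : ℝ) ^ k / (pochR a k * pochR b k * k.factorial) *
        ((∏ i ∈ Finset.range k, (((n : ℝ) - i) / n)) *
          (∏ i ∈ Finset.range k, ((c + ((n / 2 : ℕ) : ℕ) + i) / (n : ℝ))) *
          (∏ i ∈ Finset.range k, ((d + (((n - 1) / 2 : ℕ) : ℕ) + i) / (n : ℝ))))) atTop
      (nhds (climit a b k)) := by
    have h := (((hprod1.mul (hp2 c (fun n => n / 2) hhalf1)).mul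
        (hp2 d (fun n => (n - 1) / 2) hhalf2))).const_mul
        ((-1 : ℝ) ^ k / (pochR a k * pochR b k * k.factorial))
    convert h using 1
    rw [climit]
    have h4 : (2 : ℝ) ^ k * 2 ^ k = 4 ^ k := by
      rw [← mul_pow]; norm_num
    field_simp
    congr 1
    rw [div_pow, one_pow, ← h4]
    field_simp
  apply hmain.congr'
  filter_upwards [eventually_ge_atTop (max k 1)] with n hn
  have hkn : k ≤ n := le_trans (le_max_left _ _) hn
  have hn1 : 1 ≤ n := le_trans (le_max_right _ _) hn
  have hn0 : (0 : ℝ) < n := by exact_mod_cast hn1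
  have hch : (n.choose k : ℝ) * k.factorial = ∏ i ∈ Finset.range k, ((n : ℝ) - i) := by
    have h1 : k.factorial * n.choose k = n.descFactorial k :=
      (Nat.descFactorial_eq_factorial_mul_choose n k).symm
    have h2 : ((n.descFactorial k : ℕ) : ℝ) = ∏ i ∈ Finset.range k, ((n : ℝ) - i) := by
      rw [Nat.descFactorial_eq_prod_range, Nat.cast_prod]
      apply Finset.prod_congr rfl
      intro i hi
      rw [Nat.cast_sub (le_trans (Nat.le_of_lt_succ (Nat.lt_succ_of_lt
        (Finset.mem_range.mp hi))) hkn)]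
    calc (n.choose k : ℝ) * k.factorial = ((k.factorial * n.choose k : ℕ) : ℝ) := by
          push_cast; ring
      _ = ((n.descFactorial k : ℕ) : ℝ) := by rw [h1]
      _ = _ := h2
  simp only [Finset.prod_div_distrib, Finset.prod_const, Finset.card_range]
  rw [← hch, tcoef]
  simp only [pochR]
  field_simp
  ring

noncomputable def Mb (a b c d : ℝ) (k : ℕ) : ℝ :=
  (c + 2) ^ k * (d + 2) ^ k / (pochR a k * pochR b k * k.factorial)

lemma Mb_pos {a b c d : ℝ} (ha : 0 < a) (hb : 0 < b) (hc : 0 < c) (hd : 0 < d) (k : ℕ) :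
    0 < Mb a b c d k := by
  have hpa := pochR_pos ha k
  have hpb := pochR_pos hb k
  have hkf : (0 : ℝ) < k.factorial := by exact_mod_cast k.factorial_pos
  rw [Mb]
  positivity

lemma pow_le_pochR {x : ℝ} (hx : 0 < x) (k : ℕ) : x ^ k ≤ pochR x k := by
  have h := Finset.prod_le_prod (s := Finset.range k) (f := fun _ : ℕ => x)
    (g := fun i : ℕ => x + (i : ℝ))
    (fun i _ => hx.le) (fun i _ => le_add_of_nonneg_right (Nat.cast_nonneg i))
  simpa [pochR, Finset.prod_const, Finset.card_range] using h

lemma tcoef_abs_le {a b c d : ℝ} (ha : 0 < a) (hb : 0 < b) (hc : 0 < c) (hd : 0 < d)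
    {n : ℕ} (hn : 1 ≤ n) (k : ℕ) : |tcoef a b c d n k| ≤ Mb a b c d k := by
  have hpa := pochR_pos ha k
  have hpb := pochR_pos hb k
  have hkf : (0 : ℝ) < k.factorial := by exact_mod_cast k.factorial_pos
  by_cases hkn : k ≤ n
  case neg =>
    have h0 : n.choose k = 0 := Nat.choose_eq_zero_of_lt (lt_of_not_ge hkn)
    have h1 : tcoef a b c d n k = 0 := by simp [tcoef, h0]
    rw [h1, abs_zero]
    exact (Mb_pos ha hb hc hd k).le
  case pos =>
    have hn0 : (0 : ℝ) < n := by exact_mod_cast hn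
    have hcm : (0 : ℝ) < c + ((n / 2 : ℕ) : ℝ) := by positivity
    have hdm : (0 : ℝ) < d + (((n - 1) / 2 : ℕ) : ℝ) := by positivity
    have pcpos := pochR_pos hcm k
    have pdpos := pochR_pos hdm k
    have Dpos : (0 : ℝ) < (n : ℝ) ^ (3 * k) * pochR a k * pochR b k := by positivity
    have Epos : (0 : ℝ) < pochR a k * pochR b k * k.factorial := by positivity
    have habs : |tcoef a b c d n k| =
        (n.choose k : ℝ) * pochR (c + (n / 2 : ℕ)) k * pochR (d + ((n - 1) / 2 : ℕ)) k /
          ((n : ℝ) ^ (3 * k) * pochR a k * pochR b k) := by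
      rw [tcoef, abs_div, abs_mul, abs_mul, abs_mul, abs_pow, abs_neg, abs_one, one_pow,
        one_mul, Nat.abs_cast, abs_of_pos pcpos, abs_of_pos pdpos, abs_of_pos Dpos]
    rw [habs, Mb, div_le_div_iff₀ Dpos Epos]
    have h1 : (n.choose k : ℝ) * k.factorial ≤ (n : ℝ) ^ k := by
      have h2 : k.factorial * n.choose k ≤ n ^ k := by
        rw [← Nat.descFactorial_eq_factorial_mul_choose]; exact Nat.descFactorial_le_pow n k
      calc (n.choose k : ℝ) * k.factorial = ((k.factorial * n.choose k : ℕ) : ℝ) := by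
            push_cast; ring
        _ ≤ ((n ^ k : ℕ) : ℝ) := by exact_mod_cast h2
        _ = (n : ℝ) ^ k := by push_cast; ring
    have hbnd : ∀ (x : ℝ) (m : ℕ), 0 < x → (m : ℝ) ≤ (n : ℝ) →
        pochR (x + m) k ≤ ((x + 2) * n) ^ k := by
      intro x m hx hm
      have h := Finset.prod_le_prod (s := Finset.range k) (f := fun i : ℕ => x + m + i)
        (g := fun _ => (x + 2) * (n : ℝ))
        (fun i _ => by positivity)
        (fun i hi => by
          have hik : i < k := Finset.mem_range.mp hi
          have hi1 : (i : ℝ) + 1 ≤ (n : ℝ) := by exact_mod_cast Nat.lt_of_lt_of_le hik hkn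
          have hxn : x ≤ x * n := le_mul_of_one_le_right hx.le (by exact_mod_cast hn)
          show x + (m : ℝ) + (i : ℝ) ≤ (x + 2) * (n : ℝ)
          nlinarith)
      simpa [pochR, Finset.prod_const, Finset.card_range] using h
    have h2 := hbnd c (n / 2) hc (by exact_mod_cast Nat.div_le_self n 2)
    have h3 := hbnd d ((n - 1) / 2) hd
      (by exact_mod_cast le_trans (Nat.div_le_self (n - 1) 2) (Nat.sub_le n 1))
    calc (n.choose k : ℝ) * pochR (c + (n / 2 : ℕ)) k * pochR (d + ((n - 1) / 2 : ℕ)) k *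
          (pochR a k * pochR b k * k.factorial)
        = ((n.choose k : ℝ) * k.factorial * pochR (c + (n / 2 : ℕ)) k *
            pochR (d + ((n - 1) / 2 : ℕ)) k) * (pochR a k * pochR b k) := by ring
      _ ≤ ((n : ℝ) ^ k * ((c + 2) * n) ^ k * ((d + 2) * n) ^ k) * (pochR a k * pochR b k) := by
          apply mul_le_mul_of_nonneg_right _ (by positivity)
          exact mul_le_mul (mul_le_mul h1 h2 pcpos.le (by positivity)) h3 pdpos.le (by positivity)
      _ = (c + 2) ^ k * (d + 2) ^ k * ((n : ℝ) ^ (3 * k) * pochR a k * pochR b k) := by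
          rw [mul_pow, mul_pow]; ring

lemma climit_abs_le {a b c d : ℝ} (ha : 0 < a) (hb : 0 < b) (hc : 0 < c) (hd : 0 < d) (k : ℕ) :
    |climit a b k| ≤ Mb a b c d k := by
  have hpa := pochR_pos ha k
  have hpb := pochR_pos hb k
  have hkf : (0 : ℝ) < k.factorial := by exact_mod_cast k.factorial_pos
  have h4 : (0 : ℝ) < 4 ^ k * pochR a k * pochR b k * k.factorial := by positivity
  have habs : |climit a b k| = 1 / (4 ^ k * pochR a k * pochR b k * k.factorial) := by
    rw [climit, abs_div, abs_pow, abs_neg, abs_one, one_pow, abs_of_pos h4]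
  rw [habs, Mb, div_le_div_iff₀ h4 (by positivity)]
  have e1 : (1 : ℝ) ≤ (c + 2) ^ k := one_le_pow₀ (by linarith)
  have e2 : (1 : ℝ) ≤ (d + 2) ^ k := one_le_pow₀ (by linarith)
  have e3 : (1 : ℝ) ≤ (4 : ℝ) ^ k := one_le_pow₀ (by norm_num)
  nlinarith [mul_pos hpa hpb, mul_pos (mul_pos hpa hpb) hkf,
    mul_le_mul (mul_le_mul e1 e2 one_pos.le (by positivity)) e3 one_pos.le (by positivity)]

lemma Mb_mul_summable {a b c d : ℝ} (ha : 0 < a) (hb : 0 < b) (hc : 0 < c) (hd : 0 < d)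
    {R : ℝ} (hR : 0 ≤ R) : Summable (fun k => Mb a b c d k * R ^ k) := by
  apply Summable.of_nonneg_of_le
    (fun k => mul_nonneg (Mb_pos ha hb hc hd k).le (pow_nonneg hR k))
    (g := fun k => Mb a b c d k * R ^ k)
    (f := fun k => ((c + 2) * (d + 2) * R / (a * b)) ^ k / k.factorial)
  · intro k
    have hpa := pochR_pos ha k
    have hpb := pochR_pos hb k
    have hkf : (0 : ℝ) < k.factorial := by exact_mod_cast k.factorial_pos
    have hapow := pow_le_pochR ha k
    have hbpow := pow_le_pochR hb k
    have h1 : Mb a b c d k * R ^ k =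
        ((c + 2) ^ k * (d + 2) ^ k * R ^ k) / (pochR a k * pochR b k * k.factorial) := by
      rw [Mb]; ring
    have h2 : ((c + 2) * (d + 2) * R / (a * b)) ^ k / k.factorial =
        ((c + 2) ^ k * (d + 2) ^ k * R ^ k) / (a ^ k * b ^ k * k.factorial) := by
      rw [div_pow, mul_pow, mul_pow, mul_pow, div_div]
    rw [h1, h2]
    apply div_le_div_of_nonneg_left (by positivity) (by positivity)
    have := mul_le_mul (mul_le_mul hapow hbpow (by positivity) hpa.le) (le_refl (k.factorial : ℝ))
      hkf.le (by positivity)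
    exact this
  · exact Real.summable_pow_div_factorial _


lemma tcoef_eq_zero {a b c d : ℝ} {n k : ℕ} (h : n < k) : tcoef a b c d n k = 0 := by
  simp [tcoef, Nat.choose_eq_zero_of_lt h]

/-- Mehler–Heine asymptotic formula near the origin:
`(−1)^n (c+⌊n/2⌋)_n (d+⌊(n−1)/2⌋)_n / ((a)_n (b)_n) · P_n(z/n³) → ₀F₂(−;a,b;−z/4)`,
pointwise on `ℂ` and uniformly on compact subsets of `ℂ`. -/
theorem mehler_heine (a b c d : ℝ)
    (ha : 0 < a) (hb : 0 < b) (hc : 0 < c) (hd : 0 < d)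
    (hcd : max a b < min c d) :
    (∀ z : ℂ, Tendsto (fun n : ℕ =>
        (-1 : ℂ) ^ n *
          (pochC ((c : ℂ) + (n / 2 : ℕ)) n * pochC ((d : ℂ) + ((n - 1) / 2 : ℕ)) n) /
          (pochC (a : ℂ) n * pochC (b : ℂ) n) *
          PC a b c d n (z / (n : ℂ) ^ 3))
      atTop (nhds (F02 a b (-z / 4)))) ∧
    (∀ K : Set ℂ, IsCompact K →
      TendstoUniformlyOn (fun (n : ℕ) (z : ℂ) =>
        (-1 : ℂ) ^ n *
          (pochC ((c : ℂ) + (n / 2 : ℕ)) n * pochC ((d : ℂ) + ((n - 1) / 2 : ℕ)) n) /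
          (pochC (a : ℂ) n * pochC (b : ℂ) n) *
          PC a b c d n (z / (n : ℂ) ^ 3))
        (fun z => F02 a b (-z / 4)) atTop K) := by
  have hU : ∀ K : Set ℂ, IsCompact K →
      TendstoUniformlyOn (fun (n : ℕ) (z : ℂ) =>
        (-1 : ℂ) ^ n *
          (pochC ((c : ℂ) + (n / 2 : ℕ)) n * pochC ((d : ℂ) + ((n - 1) / 2 : ℕ)) n) /
          (pochC (a : ℂ) n * pochC (b : ℂ) n) *
          PC a b c d n (z / (n : ℂ) ^ 3))
        (fun z => F02 a b (-z / 4)) atTop K := by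
    intro K hK
    obtain ⟨r, hr⟩ := hK.isBounded.subset_closedBall 0
    set R : ℝ := max r 0 with hRdef
    have hR0 : (0 : ℝ) ≤ R := le_max_right r 0
    have hKR : K ⊆ Metric.closedBall 0 R :=
      hr.trans (Metric.closedBall_subset_closedBall (le_max_left r 0))
    have hMs : Summable (fun k => Mb a b c d k * R ^ k) := Mb_mul_summable ha hb hc hd hR0
    have hMs2 : Summable (fun k => 2 * (Mb a b c d k * R ^ k)) := hMs.mul_left 2
    have habs2 : ∀ {n : ℕ}, 1 ≤ n → ∀ k : ℕ,
        |tcoef a b c d n k - climit a b k| ≤ 2 * Mb a b c d k := by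
      intro n hn k
      have h1 : |tcoef a b c d n k - climit a b k| ≤ |tcoef a b c d n k| + |climit a b k| := by
        rw [sub_eq_add_neg]
        exact (abs_add_le _ _).trans (by rw [abs_neg])
      have h2 := tcoef_abs_le ha hb hc hd hn k
      have h3 := climit_abs_le ha hb hc hd (c := c) (d := d) k
      linarith
    have hDsumm : ∀ {n : ℕ}, 1 ≤ n →
        Summable (fun k => |tcoef a b c d n k - climit a b k| * R ^ k) := by
      intro n hn
      apply Summable.of_nonneg_of_le (fun k => by positivity) _ hMs2
      intro k
      exact mul_le_mul_of_nonneg_right (habs2 hn k) (pow_nonneg hR0 k) |>.trans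
        (le_of_eq (by ring))
    have hD : Tendsto (fun n => ∑' k, |tcoef a b c d n k - climit a b k| * R ^ k)
        atTop (nhds 0) := by
      have h := tendsto_tsum_of_dominated_convergence (𝓕 := atTop)
        (f := fun (n : ℕ) (k : ℕ) => |tcoef a b c d n k - climit a b k| * R ^ k)
        (g := fun _ => (0 : ℝ)) (bound := fun k => 2 * (Mb a b c d k * R ^ k)) hMs2 ?_ ?_
      · simpa using h
      · intro k
        have h2 := ((tcoef_tendsto a b c d ha hb hc hd k).sub
          (tendsto_const_nhds (x := climit a b k))).abs.mul_const (R ^ k)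
        simpa using h2
      · filter_upwards [eventually_ge_atTop 1] with n hn k
        rw [Real.norm_eq_abs, abs_of_nonneg (by positivity)]
        exact mul_le_mul_of_nonneg_right (habs2 hn k) (pow_nonneg hR0 k) |>.trans
          (le_of_eq (by ring))
    rw [Metric.tendstoUniformlyOn_iff]
    intro ε hε
    filter_upwards [hD.eventually (gt_mem_nhds hε), eventually_ge_atTop 1] with n hDn hn1
    intro z hz
    have hzR : ‖z‖ ≤ R := by
      have := Metric.mem_closedBall.mp (hKR hz)
      rwa [dist_zero_right] at this
    have hzk : ∀ k : ℕ, ‖z ^ k‖ ≤ R ^ k := fun k => by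
      rw [norm_pow]; exact pow_le_pow_left₀ (norm_nonneg z) hzR k
    have hfn : (-1 : ℂ) ^ n *
          (pochC ((c : ℂ) + (n / 2 : ℕ)) n * pochC ((d : ℂ) + ((n - 1) / 2 : ℕ)) n) /
          (pochC (a : ℂ) n * pochC (b : ℂ) n) *
          PC a b c d n (z / (n : ℂ) ^ 3)
        = ∑' k, ((tcoef a b c d n k : ℝ) : ℂ) * z ^ k := by
      rw [key_identity a b c d ha hb hc hd n z]
      exact (tsum_eq_sum (fun k hk => by
        have hlt : n < k := by
          by_contra h
          exact hk (Finset.mem_range.mpr (by omega))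
        simp [tcoef_eq_zero hlt])).symm
    have hFz : F02 a b (-z / 4) = ∑' k, ((climit a b k : ℝ) : ℂ) * z ^ k := by
      rw [F02]
      apply tsum_congr
      intro k
      have hpa : (0 : ℝ) < pochR a k := pochR_pos ha k
      have hpb : (0 : ℝ) < pochR b k := pochR_pos hb k
      have hkf : (0 : ℝ) < (k.factorial : ℝ) := by exact_mod_cast k.factorial_pos
      have hpa' : ((pochR a k : ℝ) : ℂ) ≠ 0 := by exact_mod_cast hpa.ne'
      have hpb' : ((pochR b k : ℝ) : ℂ) ≠ 0 := by exact_mod_cast hpb.ne'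
      have hkf' : ((k.factorial : ℕ) : ℂ) ≠ 0 := by exact_mod_cast k.factorial_pos.ne'
      have h4 : ((4 : ℂ)) ^ k ≠ 0 := pow_ne_zero k (by norm_num)
      rw [pochC_coe, pochC_coe, climit]
      have hnp : (-z / 4 : ℂ) ^ k = (-1) ^ k * z ^ k / 4 ^ k := by
        rw [div_pow, neg_pow]
      rw [hnp]
      push_cast
      field_simp
      try exact Or.inl trivial
      try tauto
    have S1 : Summable (fun k => ((climit a b k : ℝ) : ℂ) * z ^ k) := by
      apply Summable.of_norm
      apply Summable.of_nonneg_of_le (fun k => norm_nonneg _) _ hMs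
      intro k
      rw [norm_mul, Complex.norm_real, Real.norm_eq_abs]
      exact mul_le_mul (climit_abs_le ha hb hc hd (c := c) (d := d) k) (hzk k)
        (norm_nonneg _) (Mb_pos ha hb hc hd k).le
    have S2 : Summable (fun k => ((tcoef a b c d n k : ℝ) : ℂ) * z ^ k) := by
      apply summable_of_ne_finset_zero (s := Finset.range (n + 1))
      intro k hk
      have hlt : n < k := by
        by_contra h
        exact hk (Finset.mem_range.mpr (by omega))
      simp [tcoef_eq_zero hlt]
    have Snorm : Summable (fun k =>
        ‖((climit a b k : ℝ) : ℂ) * z ^ k - ((tcoef a b c d n k : ℝ) : ℂ) * z ^ k‖) := by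
      apply Summable.of_nonneg_of_le (fun k => norm_nonneg _) _ hMs2
      intro k
      have h1 : ((climit a b k : ℝ) : ℂ) * z ^ k - ((tcoef a b c d n k : ℝ) : ℂ) * z ^ k
          = ((climit a b k - tcoef a b c d n k : ℝ) : ℂ) * z ^ k := by push_cast; ring
      rw [h1, norm_mul, Complex.norm_real, Real.norm_eq_abs]
      have h2 : |climit a b k - tcoef a b c d n k| ≤ 2 * Mb a b c d k := by
        rw [abs_sub_comm]; exact habs2 hn1 k
      exact (mul_le_mul h2 (hzk k) (norm_nonneg _)
        (mul_nonneg (by norm_num) (Mb_pos ha hb hc hd k).le)).trans (le_of_eq (by ring))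
    rw [dist_eq_norm]
    calc ‖F02 a b (-z / 4) - (-1 : ℂ) ^ n *
          (pochC ((c : ℂ) + (n / 2 : ℕ)) n * pochC ((d : ℂ) + ((n - 1) / 2 : ℕ)) n) /
          (pochC (a : ℂ) n * pochC (b : ℂ) n) *
          PC a b c d n (z / (n : ℂ) ^ 3)‖
        = ‖∑' k, (((climit a b k : ℝ) : ℂ) * z ^ k - ((tcoef a b c d n k : ℝ) : ℂ) * z ^ k)‖ := by
          rw [hFz, hfn, S1.tsum_sub S2]
      _ ≤ ∑' k, ‖((climit a b k : ℝ) : ℂ) * z ^ k - ((tcoef a b c d n k : ℝ) : ℂ) * z ^ k‖ :=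
          norm_tsum_le_tsum_norm Snorm
      _ ≤ ∑' k, |tcoef a b c d n k - climit a b k| * R ^ k := by
          apply Summable.tsum_le_tsum _ Snorm (hDsumm hn1)
          intro k
          have h1 : ((climit a b k : ℝ) : ℂ) * z ^ k - ((tcoef a b c d n k : ℝ) : ℂ) * z ^ k
              = ((climit a b k - tcoef a b c d n k : ℝ) : ℂ) * z ^ k := by push_cast; ring
          rw [h1, norm_mul, Complex.norm_real, Real.norm_eq_abs, abs_sub_comm]
          exact mul_le_mul_of_nonneg_left (hzk k) (abs_nonneg _) |>.trans
            (le_of_eq rfl)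
      _ < ε := hDn
  exact ⟨fun z => (hU {z} isCompact_singleton).tendsto_at rfl, hU⟩
end
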